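/- arXiv:1209.2236 — 3 statements merged into one kernel-verified Lean document; each statement's English description precedes it below -/
import Mathlib

section
/- For every α ∈ (0,2) and every θ ∈ ℝ, ∫_0^∞ (1 − cos(θ C_α^{1/α} x^{−1/α})) dx = |θ|^α, equivalently 2 ∫_0^∞ sin²(½ θ C_α^{1/α} x^{−1/α}) dx = |θ|^α. -/
open MeasureTheory Filter Set
open Topology

/-- `levyC u = (∫_0^∞ x^{-u} sin x dx)⁻¹`, where the integral is understood as the improper
limit of `∫_0^R x^{-u} sin x dx` as `R → ∞`. -/
noncomputable def levyC (u : ℝ) : ℝ :=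
  (limUnder atTop (fun R : ℝ => ∫ x in (0:ℝ)..R, x ^ (-u) * Real.sin x))⁻¹

open scoped ENNReal

namespace Stmt6Aux

open Real

lemma one_sub_cos_le_sq (x : ℝ) : 1 - Real.cos x ≤ x ^ 2 / 2 := by
  have h1 : Real.sin (x / 2) ^ 2 ≤ (x / 2) ^ 2 := Real.sin_sq_le_sq
  have h2 : Real.sin (x / 2) ^ 2 = 1 / 2 - Real.cos (2 * (x / 2)) / 2 :=
    Real.sin_sq_eq_half_sub (x / 2)
  rw [mul_div_cancel₀ _ (two_ne_zero)] at h2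
  nlinarith

lemma one_sub_cos_nonneg (x : ℝ) : 0 ≤ 1 - Real.cos x := by
  have := Real.cos_le_one x; linarith

variable {a : ℝ}

/-- The absolutely convergent integral `∫_0^∞ a x^{-a-1} (1 - cos x) dx`. -/
noncomputable def K (a : ℝ) : ℝ := ∫ x in Ioi (0:ℝ), a * x ^ (-a - 1) * (1 - Real.cos x)

lemma contOn (ha : 0 < a) :
    ContinuousOn (fun x : ℝ => x ^ (-a - 1) * (1 - Real.cos x)) (Ioi 0) := by
  apply ContinuousOn.mul
  · exact fun x hx => ((Real.continuousAt_rpow_const x _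
      (Or.inl (ne_of_gt hx))).continuousWithinAt)
  · exact (continuous_const.sub Real.continuous_cos).continuousOn

lemma contOn' (ha : 0 < a) :
    ContinuousOn (fun x : ℝ => x ^ (-a) * Real.sin x) (Ioi 0) := by
  apply ContinuousOn.mul
  · exact fun x hx => ((Real.continuousAt_rpow_const x _
      (Or.inl (ne_of_gt hx))).continuousWithinAt)
  · exact Real.continuous_sin.continuousOn

lemma integrableOn_cospart (ha : a ∈ Ioo (0:ℝ) 2) :
    IntegrableOn (fun x : ℝ => x ^ (-a - 1) * (1 - Real.cos x)) (Ioi 0) := by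
  obtain ⟨ha0, ha2⟩ := ha
  have hunion : Ioc (0:ℝ) 1 ∪ Ioi 1 = Ioi 0 := Ioc_union_Ioi_eq_Ioi zero_le_one
  rw [← hunion]
  apply IntegrableOn.union
  · -- on (0,1]: bound by x^(1-a)/2
    have hig : IntegrableOn (fun x : ℝ => x ^ (1 - a) / 2) (Ioc (0:ℝ) 1) := by
      have := (intervalIntegral.intervalIntegrable_rpow'
        (a := (0:ℝ)) (b := 1) (r := 1 - a) (by linarith)).div_const 2
      rwa [intervalIntegrable_iff_integrableOn_Ioc_of_le zero_le_one] at this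
    apply Integrable.mono' hig
    · exact ((contOn ha0).mono (Ioc_subset_Ioi_self)).aestronglyMeasurable measurableSet_Ioc
    · filter_upwards [ae_restrict_mem measurableSet_Ioc] with x hx
      obtain ⟨hx0, hx1⟩ := hx
      rw [Real.norm_eq_abs, abs_of_nonneg (mul_nonneg (Real.rpow_nonneg hx0.le _) (one_sub_cos_nonneg x))]
      have h1 : x ^ (-a - 1) * (1 - Real.cos x) ≤ x ^ (-a - 1) * (x ^ 2 / 2) :=
        mul_le_mul_of_nonneg_left (one_sub_cos_le_sq x) (Real.rpow_nonneg hx0.le _)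
      have h2 : x ^ (-a - 1) * (x ^ 2 / 2) = x ^ (1 - a) / 2 := by
        have hxp : x ^ (-a - 1) * x ^ (2:ℝ) = x ^ (1 - a) := by
          rw [← Real.rpow_add hx0]; congr 1; ring
        have h2' : x ^ (2:ℝ) = x ^ (2:ℕ) := by
          rw [← Real.rpow_natCast x 2]; norm_num
        rw [h2'] at hxp
        rw [← hxp]; ring
      linarith [h1, h2.le]
  · -- on (1,∞): bound by 2 * x^(-a-1)
    have hig : IntegrableOn (fun x : ℝ => 2 * x ^ (-a - 1)) (Ioi (1:ℝ)) :=
      (integrableOn_Ioi_rpow_of_lt (by linarith) one_pos).const_mul 2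
    apply Integrable.mono' hig
    · exact ((contOn ha0).mono (Ioi_subset_Ioi zero_le_one)).aestronglyMeasurable
        measurableSet_Ioi
    · filter_upwards [ae_restrict_mem measurableSet_Ioi] with x hx
      have hx0 : (0:ℝ) < x := lt_trans one_pos hx
      rw [Real.norm_eq_abs, abs_of_nonneg (mul_nonneg (Real.rpow_nonneg hx0.le _) (one_sub_cos_nonneg x))]
      have hcos : 1 - Real.cos x ≤ 2 := by have := Real.neg_one_le_cos x; linarith
      calc x ^ (-a - 1) * (1 - Real.cos x) ≤ x ^ (-a - 1) * 2 :=
            mul_le_mul_of_nonneg_left hcos (Real.rpow_nonneg hx0.le _)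
        _ = 2 * x ^ (-a - 1) := mul_comm _ _

lemma integrableOn_sinpart (ha : a ∈ Ioo (0:ℝ) 2) {R : ℝ} (hR : 0 < R) :
    IntegrableOn (fun x : ℝ => x ^ (-a) * Real.sin x) (Ioc (0:ℝ) R) := by
  obtain ⟨ha0, ha2⟩ := ha
  have hig : IntegrableOn (fun x : ℝ => x ^ (1 - a)) (Ioc (0:ℝ) R) := by
    have := intervalIntegral.intervalIntegrable_rpow'
      (a := (0:ℝ)) (b := R) (r := 1 - a) (by linarith)
    rwa [intervalIntegrable_iff_integrableOn_Ioc_of_le hR.le] at this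
  apply Integrable.mono' hig
  · exact ((contOn' ha0).mono (Ioc_subset_Ioi_self)).aestronglyMeasurable measurableSet_Ioc
  · filter_upwards [ae_restrict_mem measurableSet_Ioc] with x hx
    obtain ⟨hx0, hxR⟩ := hx
    rw [Real.norm_eq_abs, abs_mul, abs_of_nonneg (Real.rpow_nonneg hx0.le _)]
    calc x ^ (-a) * |Real.sin x| ≤ x ^ (-a) * |x| :=
          mul_le_mul_of_nonneg_left (Real.abs_sin_le_abs) (Real.rpow_nonneg hx0.le _)
      _ = x ^ (-a) * x := by rw [abs_of_pos hx0]
      _ = x ^ (1 - a) := by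
          rw [← Real.rpow_add_one hx0.ne']; congr 1; ring


lemma ftc_identity (ha : a ∈ Ioo (0:ℝ) 2) {e R : ℝ} (he : 0 < e) (heR : e ≤ R) :
    ∫ x in e..R, x ^ (-a) * Real.sin x
      = (∫ x in e..R, a * x ^ (-a - 1) * (1 - Real.cos x))
        + (R ^ (-a) * (1 - Real.cos R) - e ^ (-a) * (1 - Real.cos e)) := by
  obtain ⟨ha0, ha2⟩ := ha
  have huIcc : uIcc e R ⊆ Ioi (0:ℝ) := by
    rw [uIcc_of_le heR]
    exact fun x hx => lt_of_lt_of_le he hx.1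
  have hderiv : ∀ x ∈ uIcc e R,
      HasDerivAt (fun x : ℝ => -(x ^ (-a) * (1 - Real.cos x)))
        (a * x ^ (-a - 1) * (1 - Real.cos x) - x ^ (-a) * Real.sin x) x := by
    intro x hx
    have hx0 : (0:ℝ) < x := huIcc hx
    have h1 : HasDerivAt (fun x : ℝ => x ^ (-a)) (-a * x ^ (-a - 1)) x := by
      have := Real.hasDerivAt_rpow_const (x := x) (p := -a) (Or.inl hx0.ne')
      convert this using 2 <;> ring
    have h2 : HasDerivAt (fun x : ℝ => 1 - Real.cos x) (Real.sin x) x := by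
      have := (Real.hasDerivAt_cos x).const_sub 1
      simpa using this
    have := (h1.fun_mul h2).fun_neg
    refine this.congr_deriv ?_
    ring
  have hcont1 : IntervalIntegrable (fun x : ℝ => a * x ^ (-a - 1) * (1 - Real.cos x))
      volume e R := by
    apply ContinuousOn.intervalIntegrable
    exact ((continuousOn_const (c := a)).mul ((contOn ha0).mono huIcc)).congr
      (fun x _ => by simp only [Pi.mul_apply]; ring)
  have hcont2 : IntervalIntegrable (fun x : ℝ => x ^ (-a) * Real.sin x) volume e R :=
    ContinuousOn.intervalIntegrable ((contOn' ha0).mono huIcc)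
  have hFTC := intervalIntegral.integral_eq_sub_of_hasDerivAt hderiv
    (hcont1.sub hcont2)
  rw [intervalIntegral.integral_sub hcont1 hcont2] at hFTC
  have : ∫ x in e..R, x ^ (-a) * Real.sin x
      = (∫ x in e..R, a * x ^ (-a - 1) * (1 - Real.cos x))
        - (-(R ^ (-a) * (1 - Real.cos R)) - -(e ^ (-a) * (1 - Real.cos e))) := by
    linarith [hFTC]
  rw [this]; ring

lemma Ioc_identity (ha : a ∈ Ioo (0:ℝ) 2) {R : ℝ} (hR : 0 < R) :
    ∫ x in Ioc (0:ℝ) R, x ^ (-a) * Real.sin x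
      = (∫ x in Ioc (0:ℝ) R, a * x ^ (-a - 1) * (1 - Real.cos x))
        + R ^ (-a) * (1 - Real.cos R) := by
  obtain ⟨ha0, ha2⟩ := ha
  set e : ℕ → ℝ := fun n => R / (n + 1) with he_def
  have he_pos : ∀ n, 0 < e n := fun n => div_pos hR (by positivity)
  have he_le : ∀ n, e n ≤ R := fun n => by
    rw [he_def]
    apply div_le_self hR.le
    have : (0:ℝ) ≤ n := Nat.cast_nonneg n
    linarith
  have he_anti : ∀ {m n : ℕ}, m ≤ n → e n ≤ e m := by
    intro m n hmn
    apply div_le_div_of_nonneg_left hR.le (by positivity)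
    have : (m:ℝ) ≤ n := Nat.cast_le.mpr hmn
    linarith
  have he_tendsto : Tendsto e atTop (𝓝 0) := by
    rw [he_def]
    have : Tendsto (fun n : ℕ => R / (n + 1 : ℕ)) atTop (𝓝 0) :=
      (tendsto_const_div_atTop_nhds_zero_nat R).comp (tendsto_add_atTop_nat 1)
    convert this using 2 with n
    push_cast; ring
  have hmono : Monotone (fun n : ℕ => Ioc (e n) R) := by
    intro m n hmn
    exact Ioc_subset_Ioc_left (he_anti hmn)
  have hunion : (⋃ n, Ioc (e n) R) = Ioc (0:ℝ) R := by
    apply Subset.antisymm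
    · exact iUnion_subset fun n => Ioc_subset_Ioc_left (he_pos n).le
    · intro x hx
      obtain ⟨hx0, hxR⟩ := hx
      obtain ⟨n, hn⟩ := exists_nat_gt (R / x)
      refine mem_iUnion.mpr ⟨n, ?_, hxR⟩
      rw [he_def]
      rw [div_lt_iff₀ (by positivity)]
      rw [div_lt_iff₀ hx0] at hn
      nlinarith
  -- limits of set integrals
  have hsin : Tendsto (fun n => ∫ x in Ioc (e n) R, x ^ (-a) * Real.sin x) atTop
      (𝓝 (∫ x in Ioc (0:ℝ) R, x ^ (-a) * Real.sin x)) := by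
    have := tendsto_setIntegral_of_monotone (fun n => measurableSet_Ioc) hmono
      ((integrableOn_sinpart ⟨ha0, ha2⟩ hR).mono_set hunion.subset)
    rwa [hunion] at this
  have hcosK : IntegrableOn (fun x : ℝ => a * x ^ (-a - 1) * (1 - Real.cos x))
      (Ioc (0:ℝ) R) := by
    have := ((integrableOn_cospart ⟨ha0, ha2⟩).mono_set
      (Ioc_subset_Ioi_self : Ioc (0:ℝ) R ⊆ Ioi 0)).const_mul a
    simpa [mul_assoc, IntegrableOn] using this
  have hcos : Tendsto (fun n => ∫ x in Ioc (e n) R, a * x ^ (-a - 1) * (1 - Real.cos x))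
      atTop (𝓝 (∫ x in Ioc (0:ℝ) R, a * x ^ (-a - 1) * (1 - Real.cos x))) := by
    have := tendsto_setIntegral_of_monotone (fun n => measurableSet_Ioc) hmono
      (hcosK.mono_set hunion.subset)
    rwa [hunion] at this
  -- boundary term tends to 0
  have hbdry : Tendsto (fun n => e n ^ (-a) * (1 - Real.cos (e n))) atTop (𝓝 0) := by
    apply squeeze_zero
    · intro n
      exact mul_nonneg (Real.rpow_nonneg (he_pos n).le _) (one_sub_cos_nonneg _)
    · intro n
      show e n ^ (-a) * (1 - Real.cos (e n)) ≤ e n ^ (2 - a) / 2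
      have h1 : e n ^ (-a) * (1 - Real.cos (e n)) ≤ e n ^ (-a) * ((e n) ^ 2 / 2) :=
        mul_le_mul_of_nonneg_left (one_sub_cos_le_sq _) (Real.rpow_nonneg (he_pos n).le _)
      have h2 : e n ^ (-a) * ((e n) ^ 2 / 2) = e n ^ (2 - a) / 2 := by
        have hxp : e n ^ (-a) * e n ^ (2:ℝ) = e n ^ (2 - a) := by
          rw [← Real.rpow_add (he_pos n)]; congr 1; ring
        have h2' : e n ^ (2:ℝ) = e n ^ (2:ℕ) := by
          rw [← Real.rpow_natCast (e n) 2]; norm_num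
        rw [h2'] at hxp
        rw [← hxp]; ring
      linarith
    · have hc : ContinuousAt (fun t : ℝ => t ^ (2 - a)) 0 :=
        Real.continuousAt_rpow_const 0 (2 - a) (Or.inr (by linarith))
      have := (hc.tendsto.comp he_tendsto)
      rw [Real.zero_rpow (by linarith : (2:ℝ) - a ≠ 0)] at this
      have := this.div_const 2
      simpa using this
  -- identity along the sequence
  have hident : ∀ n, ∫ x in Ioc (e n) R, x ^ (-a) * Real.sin x
      = (∫ x in Ioc (e n) R, a * x ^ (-a - 1) * (1 - Real.cos x))
        + (R ^ (-a) * (1 - Real.cos R) - e n ^ (-a) * (1 - Real.cos (e n))) := by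
    intro n
    rw [← intervalIntegral.integral_of_le (he_le n), ← intervalIntegral.integral_of_le (he_le n)]
    exact ftc_identity ⟨ha0, ha2⟩ (he_pos n) (he_le n)
  have hlim2 : Tendsto (fun n => ∫ x in Ioc (e n) R, x ^ (-a) * Real.sin x) atTop
      (𝓝 ((∫ x in Ioc (0:ℝ) R, a * x ^ (-a - 1) * (1 - Real.cos x))
        + (R ^ (-a) * (1 - Real.cos R) - 0))) := by
    simp only [hident]
    exact hcos.add (tendsto_const_nhds.sub hbdry)
  have := tendsto_nhds_unique hsin hlim2
  rw [this]; ring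


lemma tendsto_K (ha : a ∈ Ioo (0:ℝ) 2) :
    Tendsto (fun R : ℝ => ∫ x in (0:ℝ)..R, x ^ (-a) * Real.sin x) atTop (𝓝 (K a)) := by
  obtain ⟨ha0, ha2⟩ := ha
  have hKint : IntegrableOn (fun x : ℝ => a * x ^ (-a - 1) * (1 - Real.cos x)) (Ioi 0) := by
    have := (integrableOn_cospart ⟨ha0, ha2⟩).const_mul a
    simpa [mul_assoc, IntegrableOn] using this
  have hcos : Tendsto (fun R : ℝ => ∫ x in (0:ℝ)..R, a * x ^ (-a - 1) * (1 - Real.cos x))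
      atTop (𝓝 (K a)) :=
    intervalIntegral_tendsto_integral_Ioi 0 hKint tendsto_id
  have hbdry : Tendsto (fun R : ℝ => R ^ (-a) * (1 - Real.cos R)) atTop (𝓝 0) := by
    apply squeeze_zero' (g := fun R : ℝ => 2 * R ^ (-a))
    · filter_upwards [eventually_ge_atTop (0:ℝ)] with R hR
      exact mul_nonneg (Real.rpow_nonneg hR _) (one_sub_cos_nonneg _)
    · filter_upwards [eventually_ge_atTop (0:ℝ)] with R hR
      have hcos2 : 1 - Real.cos R ≤ 2 := by have := Real.neg_one_le_cos R; linarith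
      calc R ^ (-a) * (1 - Real.cos R) ≤ R ^ (-a) * 2 :=
            mul_le_mul_of_nonneg_left hcos2 (Real.rpow_nonneg hR _)
        _ = 2 * R ^ (-a) := mul_comm _ _
    · have := (tendsto_rpow_neg_atTop ha0).const_mul (2:ℝ)
      simpa using this
  have hcomb := hcos.add hbdry
  rw [add_zero] at hcomb
  apply hcomb.congr'
  filter_upwards [eventually_gt_atTop (0:ℝ)] with R hR
  rw [intervalIntegral.integral_of_le hR.le, intervalIntegral.integral_of_le hR.le,
    Ioc_identity ⟨ha0, ha2⟩ hR]

lemma K_pos (ha : a ∈ Ioo (0:ℝ) 2) : 0 < K a := by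
  obtain ⟨ha0, ha2⟩ := ha
  have hKint : IntegrableOn (fun x : ℝ => a * x ^ (-a - 1) * (1 - Real.cos x)) (Ioi 0) := by
    have := (integrableOn_cospart ⟨ha0, ha2⟩).const_mul a
    simpa [mul_assoc, IntegrableOn] using this
  rw [K]
  have hnn : 0 ≤ᵐ[volume.restrict (Ioi (0:ℝ))]
      fun x : ℝ => a * x ^ (-a - 1) * (1 - Real.cos x) := by
    filter_upwards [ae_restrict_mem measurableSet_Ioi] with x hx
    exact mul_nonneg (mul_nonneg ha0.le (Real.rpow_nonneg (le_of_lt hx) _))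
      (one_sub_cos_nonneg x)
  rw [setIntegral_pos_iff_support_of_nonneg_ae hnn hKint]
  have hsub : Ioo (0:ℝ) Real.pi ⊆
      Function.support (fun x : ℝ => a * x ^ (-a - 1) * (1 - Real.cos x)) ∩ Ioi 0 := by
    intro x hx
    obtain ⟨hx0, hxpi⟩ := hx
    refine ⟨?_, hx0⟩
    have hsin : 0 < Real.sin (x / 2) :=
      Real.sin_pos_of_pos_of_lt_pi (by linarith) (by linarith [Real.pi_pos])
    have hid : Real.sin (x / 2) ^ 2 = 1 / 2 - Real.cos (2 * (x / 2)) / 2 :=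
      Real.sin_sq_eq_half_sub (x / 2)
    rw [mul_div_cancel₀ _ (two_ne_zero)] at hid
    have hcos : Real.cos x < 1 := by nlinarith
    have : 0 < a * x ^ (-a - 1) * (1 - Real.cos x) :=
      mul_pos (mul_pos ha0 (Real.rpow_pos_of_pos hx0 _)) (by linarith)
    exact this.ne'
  calc (0:ℝ≥0∞) < volume (Ioo (0:ℝ) Real.pi) := by
        rw [Real.volume_Ioo]
        simp [ENNReal.ofReal_pos, Real.pi_pos]
    _ ≤ _ := measure_mono hsub

lemma levyC_eq (ha : a ∈ Ioo (0:ℝ) 2) : levyC a = (K a)⁻¹ := by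
  unfold levyC
  congr 1
  exact (tendsto_K ha).limUnder_eq

lemma subst (ha : a ∈ Ioo (0:ℝ) 2) {b : ℝ} (hb : 0 < b) :
    (∫ x in Ioi (0:ℝ), (1 - Real.cos (b * x ^ (-a⁻¹)))) = b ^ a * K a := by
  obtain ⟨ha0, ha2⟩ := ha
  have step1 := integral_comp_rpow_Ioi (fun y : ℝ => 1 - Real.cos (b * y ^ (-a⁻¹)))
    (p := -a) (neg_ne_zero.mpr ha0.ne')
  rw [← step1]
  have hcong1 : ∫ x in Ioi (0:ℝ),
      (|(-a)| * x ^ (-a - 1)) • ((1:ℝ) - Real.cos (b * (x ^ (-a)) ^ (-a⁻¹)))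
      = ∫ x in Ioi (0:ℝ), a * x ^ (-a - 1) * (1 - Real.cos (b * x)) := by
    apply setIntegral_congr_fun measurableSet_Ioi
    intro x hx
    dsimp only
    have hx0 : (0:ℝ) < x := hx
    have h1 : (x ^ (-a)) ^ (-a⁻¹) = x := by
      rw [← Real.rpow_mul hx0.le]
      rw [show (-a) * (-a⁻¹) = a * a⁻¹ by ring, mul_inv_cancel₀ ha0.ne', Real.rpow_one]
    rw [h1, abs_neg, abs_of_pos ha0, smul_eq_mul]
  rw [hcong1]
  -- now scale by b
  have step2 := integral_comp_mul_left_Ioi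
    (fun v : ℝ => a * (b⁻¹ * v) ^ (-a - 1) * (1 - Real.cos v)) 0 hb
  simp only [inv_mul_cancel_left₀ hb.ne', mul_zero] at step2
  rw [step2, smul_eq_mul]
  have hcong2 : ∫ v in Ioi (0:ℝ), a * (b⁻¹ * v) ^ (-a - 1) * (1 - Real.cos v)
      = ∫ v in Ioi (0:ℝ), b ^ (a + 1) * (a * v ^ (-a - 1) * (1 - Real.cos v)) := by
    apply setIntegral_congr_fun measurableSet_Ioi
    intro v hv
    dsimp only
    have hv0 : (0:ℝ) < v := hv
    have h1 : (b⁻¹ * v) ^ (-a - 1) = b ^ (a + 1) * v ^ (-a - 1) := by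
      rw [Real.mul_rpow (inv_nonneg.mpr hb.le) hv0.le, Real.inv_rpow hb.le,
        ← Real.rpow_neg hb.le]
      rw [show -(-a - 1) = a + 1 by ring]
    rw [h1]; ring
  rw [hcong2, MeasureTheory.integral_const_mul]
  have : (∫ v in Ioi (0:ℝ), a * v ^ (-a - 1) * (1 - Real.cos v)) = K a := rfl
  rw [this]
  have hb1 : b⁻¹ * (b ^ (a + 1) * K a) = (b⁻¹ * b ^ (a + 1)) * K a := by ring
  rw [hb1]
  congr 1
  rw [← Real.rpow_neg_one b, ← Real.rpow_add hb]
  congr 1; ring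

end Stmt6Aux

/-- for every `α ∈ (0,2)` and `θ ∈ ℝ`,
`∫_0^∞ (1 - cos(θ C_α^{1/α} x^{-1/α})) dx = |θ|^α`, equivalently
`2∫_0^∞ sin²(½ θ C_α^{1/α} x^{-1/α}) dx = |θ|^α`. -/
theorem stmt6 (a : ℝ) (ha : a ∈ Ioo (0:ℝ) 2) (θ : ℝ) :
    (∫ x in Ioi (0:ℝ), (1 - Real.cos (θ * levyC a ^ a⁻¹ * x ^ (-a⁻¹)))) = |θ| ^ a ∧
    2 * (∫ x in Ioi (0:ℝ), Real.sin (θ * levyC a ^ a⁻¹ * x ^ (-a⁻¹) / 2) ^ 2) = |θ| ^ a := by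
  obtain ⟨ha0, ha2⟩ := ha
  have key : ∀ z : ℝ, 2 * Real.sin (z / 2) ^ 2 = 1 - Real.cos z := fun z => by
    have hid := Real.sin_sq_eq_half_sub (z / 2)
    rw [mul_div_cancel₀ _ (two_ne_zero)] at hid
    rw [hid]; ring
  have hmain : (∫ x in Ioi (0:ℝ), (1 - Real.cos (θ * levyC a ^ a⁻¹ * x ^ (-a⁻¹)))) = |θ| ^ a := by
    rcases eq_or_ne θ 0 with rfl | hθ
    · simp [Real.zero_rpow ha0.ne']
    · have hK := Stmt6Aux.K_pos ⟨ha0, ha2⟩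
      have hC : levyC a = (Stmt6Aux.K a)⁻¹ := Stmt6Aux.levyC_eq ⟨ha0, ha2⟩
      have hCpos : 0 < levyC a := by rw [hC]; positivity
      set b : ℝ := |θ| * levyC a ^ a⁻¹ with hb_def
      have hb : 0 < b := mul_pos (abs_pos.mpr hθ) (Real.rpow_pos_of_pos hCpos _)
      have hcong : (∫ x in Ioi (0:ℝ), (1 - Real.cos (θ * levyC a ^ a⁻¹ * x ^ (-a⁻¹))))
          = ∫ x in Ioi (0:ℝ), (1 - Real.cos (b * x ^ (-a⁻¹))) := by
        apply setIntegral_congr_fun measurableSet_Ioi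
        intro x hx
        dsimp only
        have hx0 : (0:ℝ) < x := hx
        have hxp : 0 < x ^ (-a⁻¹) := Real.rpow_pos_of_pos hx0 _
        have h1 : |θ * levyC a ^ a⁻¹ * x ^ (-a⁻¹)| = b * x ^ (-a⁻¹) := by
          rw [abs_mul, abs_mul, abs_of_pos (Real.rpow_pos_of_pos hCpos a⁻¹),
            abs_of_pos hxp, hb_def]
        rw [← Real.cos_abs (θ * levyC a ^ a⁻¹ * x ^ (-a⁻¹)), h1]
      rw [hcong, Stmt6Aux.subst ⟨ha0, ha2⟩ hb]
      have hba : b ^ a = |θ| ^ a * levyC a := by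
        rw [hb_def, Real.mul_rpow (abs_nonneg θ) (Real.rpow_pos_of_pos hCpos _).le,
          ← Real.rpow_mul hCpos.le, inv_mul_cancel₀ ha0.ne', Real.rpow_one]
      rw [hba, hC, mul_assoc, inv_mul_cancel₀ hK.ne', mul_one]
  refine ⟨hmain, ?_⟩
  rw [← MeasureTheory.integral_const_mul]
  simp only [key]
  exact hmain
end

section
/- Let α : [0,1] → [c,d] ⊂ (0,2) be continuous, t ∈ [0,1] and θ ∈ ℝ. Then 2 ∫_0^1 ∫_0^∞ sin²( ½ θ C_{α(x)}^{1/α(x)} 1_{[0,t]}(x) y^{−1/α(x)} ) dy dx = ∫_0^t |θ|^{α(x)} dx. -/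
open MeasureTheory Filter Set

namespace Stmt7Aux

noncomputable def Kf (u : ℝ) : ℝ → ℝ := fun x => (1 - Real.cos x) * (u * x ^ (-1 - u))

noncomputable def Kv (u : ℝ) : ℝ := ∫ x in Ioi (0:ℝ), Kf u x

lemma Kf_nonneg {u : ℝ} (hu : 0 < u) {x : ℝ} (hx : 0 < x) : 0 ≤ Kf u x :=
  mul_nonneg (by linarith [Real.cos_le_one x]) (mul_nonneg hu.le (Real.rpow_nonneg hx.le _))

lemma Kf_meas (u : ℝ) : Measurable (Kf u) := by
  unfold Kf; fun_prop

lemma Kf_integrableOn {u : ℝ} (hu : 0 < u) (hu2 : u < 2) :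
    IntegrableOn (Kf u) (Ioi 0) := by
  have h1 : IntegrableOn (Kf u) (Ioc 0 1) := by
    have hd : IntegrableOn (fun x : ℝ => u / 2 * x ^ (1 - u)) (Ioc 0 1) := by
      have := (intervalIntegral.intervalIntegrable_rpow' (a := 0) (b := 1) (r := 1 - u) (by linarith)).1
      exact this.const_mul _
    refine Integrable.mono hd ((Kf_meas u).aestronglyMeasurable) ?_
    filter_upwards [ae_restrict_mem measurableSet_Ioc] with x hx
    have hx0 : 0 < x := hx.1
    have hb : Kf u x ≤ u / 2 * x ^ (1 - u) := by
      have h2 : 1 - Real.cos x ≤ x ^ 2 / 2 := by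
        have := Real.one_sub_sq_div_two_le_cos (x := x); linarith
      have h3 : Kf u x ≤ x ^ 2 / 2 * (u * x ^ (-1 - u)) :=
        mul_le_mul_of_nonneg_right h2 (mul_nonneg hu.le (Real.rpow_nonneg hx0.le _))
      refine h3.trans_eq ?_
      have hxx : (x:ℝ) ^ (2:ℕ) * x ^ (-1 - u) = x ^ (1 - u) := by
        rw [← Real.rpow_natCast x 2, ← Real.rpow_add hx0]
        congr 1; ring
      calc x ^ 2 / 2 * (u * x ^ (-1 - u)) = u / 2 * ((x:ℝ) ^ (2:ℕ) * x ^ (-1 - u)) := by ring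
        _ = u / 2 * x ^ (1 - u) := by rw [hxx]
    rw [Real.norm_eq_abs, Real.norm_eq_abs, abs_of_nonneg (Kf_nonneg hu hx0)]
    exact hb.trans (le_abs_self _)
  have h2 : IntegrableOn (Kf u) (Ioi 1) := by
    have hd : IntegrableOn (fun x : ℝ => 2 * (u * x ^ (-1 - u))) (Ioi 1) := by
      have := integrableOn_Ioi_rpow_of_lt (a := -1 - u) (by linarith) (c := 1) one_pos
      exact (this.const_mul u).const_mul 2
    refine Integrable.mono hd ((Kf_meas u).aestronglyMeasurable) ?_
    filter_upwards [ae_restrict_mem measurableSet_Ioi] with x hx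
    have hx0 : (0:ℝ) < x := lt_trans one_pos hx
    rw [Real.norm_eq_abs, Real.norm_eq_abs, abs_of_nonneg (Kf_nonneg hu hx0)]
    refine le_trans ?_ (le_abs_self _)
    have : 1 - Real.cos x ≤ 2 := by linarith [Real.neg_one_le_cos x]
    exact mul_le_mul_of_nonneg_right this (mul_nonneg hu.le (Real.rpow_nonneg hx0.le _))
  have : Ioi (0:ℝ) = Ioc 0 1 ∪ Ioi 1 := (Ioc_union_Ioi_eq_Ioi zero_le_one).symm
  rw [this]
  exact h1.union h2

lemma Kv_pos {u : ℝ} (hu : 0 < u) (hu2 : u < 2) : 0 < Kv u := by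
  have hint := Kf_integrableOn hu hu2
  have hsub : Ioc (1:ℝ) 2 ⊆ Ioi 0 := fun x hx => lt_trans one_pos hx.1
  have hmono : ∫ x in Ioc (1:ℝ) 2, Kf u x ≤ Kv u := by
    refine setIntegral_mono_set hint ?_ (HasSubset.Subset.eventuallyLE hsub)
    filter_upwards [ae_restrict_mem measurableSet_Ioi] with x hx
    exact Kf_nonneg hu hx
  have hpos : 0 < ∫ x in (1:ℝ)..2, Kf u x := by
    refine intervalIntegral.intervalIntegral_pos_of_pos_on ?_ ?_ one_lt_two
    · refine (hint.mono_set ?_).intervalIntegrable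
      rw [uIcc_of_le (by norm_num : (1:ℝ) ≤ 2)]
      exact fun x hx => lt_of_lt_of_le one_pos hx.1
    · intro x hx
      have hx0 : (0:ℝ) < x := lt_trans one_pos hx.1
      have hcos : Real.cos x < 1 := by
        have hpi : x ≤ Real.pi := le_trans hx.2.le (by linarith [Real.pi_gt_three])
        have := Real.cos_le_one_sub_mul_cos_sq (x := x)
          (by rw [abs_of_pos hx0]; exact hpi)
        have h4 : 0 < 2 / Real.pi ^ 2 * x ^ 2 := by positivity
        linarith
      exact mul_pos (by linarith) (mul_pos hu (Real.rpow_pos_of_pos hx0 _))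
  calc (0:ℝ) < ∫ x in (1:ℝ)..2, Kf u x := hpos
    _ = ∫ x in Ioc (1:ℝ) 2, Kf u x := intervalIntegral.integral_of_le (by norm_num)
    _ ≤ Kv u := hmono

lemma sin_integrableOn {u : ℝ} (hu : 0 < u) (hu2 : u < 2) {R : ℝ} (hR : 0 < R) :
    IntervalIntegrable (fun x : ℝ => x ^ (-u) * Real.sin x) volume 0 R := by
  rw [intervalIntegrable_iff_integrableOn_Ioc_of_le hR.le]
  have hd : IntegrableOn (fun x : ℝ => x ^ (1 - u)) (Ioc 0 R) :=
    (intervalIntegral.intervalIntegrable_rpow' (a := 0) (b := R) (r := 1 - u) (by linarith)).1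
  refine Integrable.mono hd ?_ ?_
  · apply Measurable.aestronglyMeasurable; fun_prop
  filter_upwards [ae_restrict_mem measurableSet_Ioc] with x hx
  have hx0 : 0 < x := hx.1
  rw [Real.norm_eq_abs, Real.norm_eq_abs, abs_mul,
    abs_of_nonneg (Real.rpow_nonneg hx0.le _), abs_of_nonneg (Real.rpow_nonneg hx0.le _)]
  have h1 : |Real.sin x| ≤ x := le_of_le_of_eq Real.abs_sin_le_abs (abs_of_pos hx0)
  have h2 : x ^ (-u) * x = x ^ (1 - u) := by
    nth_rewrite 2 [← Real.rpow_one x]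
    rw [← Real.rpow_add hx0]; congr 1; ring
  calc x ^ (-u) * |Real.sin x| ≤ x ^ (-u) * x :=
        mul_le_mul_of_nonneg_left h1 (Real.rpow_nonneg hx0.le _)
    _ = x ^ (1 - u) := h2

lemma key_identity {u : ℝ} (hu : 0 < u) (hu2 : u < 2) {R : ℝ} (hR : 0 < R) :
    ∫ x in (0:ℝ)..R, x ^ (-u) * Real.sin x
      = (1 - Real.cos R) * R ^ (-u) + ∫ x in (0:ℝ)..R, Kf u x := by
  have hsin := sin_integrableOn hu hu2 hR
  have hK : IntervalIntegrable (Kf u) volume 0 R := by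
    rw [intervalIntegrable_iff_integrableOn_Ioc_of_le hR.le]
    exact (Kf_integrableOn hu hu2).mono_set Ioc_subset_Ioi_self
  set F : ℝ → ℝ := fun x => (1 - Real.cos x) * x ^ (-u) with hF
  have hderiv : ∀ x ∈ Ioo (0:ℝ) R,
      HasDerivAt F (x ^ (-u) * Real.sin x - Kf u x) x := by
    intro x hx
    have hx0 : 0 < x := hx.1
    have h1 : HasDerivAt (fun y : ℝ => 1 - Real.cos y) (Real.sin x) x := by
      simpa using (Real.hasDerivAt_cos x).const_sub 1
    have h2 : HasDerivAt (fun y : ℝ => y ^ (-u)) (-u * x ^ (-u - 1)) x :=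
      Real.hasDerivAt_rpow_const (Or.inl hx0.ne')
    have := h1.mul h2
    convert this using 1
    any_goals rfl
    unfold Kf
    have : x ^ (-u - 1) = x ^ (-1 - u) := by congr 1; ring
    rw [this]; ring
  have h0 : Tendsto F (nhdsWithin 0 (Ioi 0)) (nhds 0) := by
    have hbound : ∀ x ∈ Ioi (0:ℝ), F x ≤ x ^ (2 - u) / 2 := by
      intro x hx
      have hx0 : (0:ℝ) < x := hx
      have h2 : 1 - Real.cos x ≤ x ^ 2 / 2 := by
        have := Real.one_sub_sq_div_two_le_cos (x := x); linarith
      have : F x ≤ x ^ 2 / 2 * x ^ (-u) :=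
        mul_le_mul_of_nonneg_right h2 (Real.rpow_nonneg hx0.le _)
      refine this.trans_eq ?_
      rw [← Real.rpow_natCast x 2, div_mul_eq_mul_div, ← Real.rpow_add hx0,
        show ((2:ℕ):ℝ) + -u = 2 - u by push_cast; ring]
    have hlim : Tendsto (fun x : ℝ => x ^ (2 - u) / 2) (nhdsWithin 0 (Ioi 0)) (nhds 0) := by
      have hc : ContinuousAt (fun x : ℝ => x ^ (2 - u)) 0 := by
        apply Real.continuousAt_rpow_const
        right; linarith
      have : Tendsto (fun x : ℝ => x ^ (2 - u)) (nhdsWithin 0 (Ioi 0)) (nhds ((0:ℝ) ^ (2 - u))) :=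
        (hc.tendsto).mono_left nhdsWithin_le_nhds
      rw [Real.zero_rpow (by linarith)] at this
      simpa using this.div_const 2
    refine squeeze_zero' ?_ ?_ hlim
    · filter_upwards [self_mem_nhdsWithin] with x hx
      exact mul_nonneg (by linarith [Real.cos_le_one x]) (Real.rpow_nonneg (le_of_lt hx) _)
    · filter_upwards [self_mem_nhdsWithin] with x hx
      exact hbound x hx
  have hRlim : Tendsto F (nhdsWithin R (Iio R)) (nhds (F R)) := by
    have hc : ContinuousAt F R := by
      apply ContinuousAt.mul
      · exact (continuous_const.sub Real.continuous_cos).continuousAt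
      · exact Real.continuousAt_rpow_const R _ (Or.inl hR.ne')
    exact hc.continuousWithinAt
  have := intervalIntegral.integral_eq_sub_of_hasDerivAt_of_tendsto hR hderiv
    (hsin.sub hK) h0 hRlim
  rw [intervalIntegral.integral_sub hsin hK] at this
  have hFR : F R = (1 - Real.cos R) * R ^ (-u) := rfl
  linarith [this]

lemma tendsto_Kv {u : ℝ} (hu : 0 < u) (hu2 : u < 2) :
    Tendsto (fun R : ℝ => ∫ x in (0:ℝ)..R, x ^ (-u) * Real.sin x) atTop (nhds (Kv u)) := by
  have h1 : Tendsto (fun R : ℝ => (1 - Real.cos R) * R ^ (-u)) atTop (nhds 0) := by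
    have hlim : Tendsto (fun R : ℝ => 2 * R ^ (-u)) atTop (nhds 0) := by
      simpa using (tendsto_rpow_neg_atTop hu).const_mul 2
    refine squeeze_zero_norm' ?_ hlim
    filter_upwards [eventually_gt_atTop (0:ℝ)] with R hR
    rw [Real.norm_eq_abs, abs_mul, abs_of_nonneg (Real.rpow_nonneg hR.le _)]
    have : |1 - Real.cos R| ≤ 2 := by
      rw [abs_le]; constructor <;> [linarith [Real.cos_le_one R]; linarith [Real.neg_one_le_cos R]]
    exact mul_le_mul_of_nonneg_right this (Real.rpow_nonneg hR.le _)
  have h2 : Tendsto (fun R : ℝ => ∫ x in (0:ℝ)..R, Kf u x) atTop (nhds (Kv u)) :=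
    intervalIntegral_tendsto_integral_Ioi 0 (Kf_integrableOn hu hu2) tendsto_id
  have := h1.add h2
  rw [zero_add] at this
  refine this.congr' ?_
  filter_upwards [eventually_gt_atTop (0:ℝ)] with R hR
  exact (key_identity hu hu2 hR).symm

lemma levyC_eq {u : ℝ} (hu : 0 < u) (hu2 : u < 2) : levyC u = (Kv u)⁻¹ := by
  unfold levyC
  rw [(tendsto_Kv hu hu2).limUnder_eq]

lemma inner_integral {u : ℝ} (hu : 0 < u) (hu2 : u < 2) {b : ℝ} (hb : 0 ≤ b) :
    ∫ y in Ioi (0:ℝ), Real.sin (b * y ^ (-u⁻¹) / 2) ^ 2 = b ^ u * Kv u / 2 := by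
  have hhalf : ∀ y : ℝ, Real.sin (b * y ^ (-u⁻¹) / 2) ^ 2
      = (1 - Real.cos (b * y ^ (-u⁻¹))) / 2 := by
    intro y
    rw [Real.sin_sq_eq_half_sub, show 2 * (b * y ^ (-u⁻¹) / 2) = b * y ^ (-u⁻¹) by ring]
    ring
  simp_rw [hhalf]
  rw [integral_div]
  congr 1
  rcases eq_or_lt_of_le hb with hb0 | hb0
  · simp [← hb0, Real.zero_rpow hu.ne']
  -- substitution y = x ^ (-u)
  have hsub1 := integral_comp_rpow_Ioi (fun y => 1 - Real.cos (b * y ^ (-u⁻¹)))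
    (p := -u) (neg_ne_zero.mpr hu.ne')
  rw [← hsub1]
  have hcongr : ∀ x ∈ Ioi (0:ℝ),
      (|-u| * x ^ (-u - 1)) • (1 - Real.cos (b * (x ^ (-u)) ^ (-u⁻¹)))
        = b ^ (1 + u) * Kf u (b * x) := by
    intro x hx
    have hx0 : (0:ℝ) < x := hx
    have h1 : (x ^ (-u)) ^ (-u⁻¹) = x := by
      rw [← Real.rpow_mul hx0.le, neg_mul_neg, mul_inv_cancel₀ hu.ne', Real.rpow_one]
    have h2 : (b * x) ^ (-1 - u) = b ^ (-1 - u) * x ^ (-1 - u) :=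
      Real.mul_rpow hb0.le hx0.le
    have h3 : b ^ (1 + u) * b ^ (-1 - u) = 1 := by
      rw [← Real.rpow_add hb0, show 1 + u + (-1 - u) = 0 by ring, Real.rpow_zero]
    have h4 : x ^ (-u - 1) = x ^ (-1 - u) := by rw [show -u - 1 = -1 - u by ring]
    rw [h1, abs_neg, abs_of_pos hu, smul_eq_mul, h4]
    unfold Kf
    rw [h2]
    linear_combination ((Real.cos (b*x) - 1) * (u * x ^ (-1 - u))) * h3
  rw [setIntegral_congr_fun measurableSet_Ioi hcongr, integral_const_mul]
  have hsub2 := integral_comp_mul_left_Ioi (Kf u) 0 hb0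
  rw [mul_zero] at hsub2
  rw [hsub2, smul_eq_mul]
  have : b ^ (1 + u) * (b⁻¹ * ∫ x in Ioi (0:ℝ), Kf u x) = (b ^ (1 + u) * b⁻¹) * Kv u := by
    rw [Kv]; ring
  rw [this, ← Real.rpow_neg_one b, ← Real.rpow_add hb0,
    show 1 + u + -1 = u by ring]

end Stmt7Aux

open Stmt7Aux

/-- for `α : [0,1] → [c,d] ⊂ (0,2)` continuous, `t ∈ [0,1]`, `θ ∈ ℝ`,
`2∫_0^1 ∫_0^∞ sin²(½ θ C_{α(x)}^{1/α(x)} 1_{[0,t]}(x) y^{-1/α(x)}) dy dx = ∫_0^t |θ|^{α(x)} dx`. -/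
theorem stmt7 (c d : ℝ) (hc : 0 < c) (hcd : c ≤ d) (hd2 : d < 2)
    (α : ℝ → ℝ) (hαcont : ContinuousOn α (Icc 0 1))
    (hαmem : ∀ s ∈ Icc (0:ℝ) 1, α s ∈ Icc c d)
    (t : ℝ) (ht : t ∈ Icc (0:ℝ) 1) (θ : ℝ) :
    2 * (∫ x in (0:ℝ)..1, ∫ y in Ioi (0:ℝ),
        Real.sin (θ * levyC (α x) ^ (α x)⁻¹ * (if x ∈ Icc (0:ℝ) t then (1:ℝ) else 0)
            * y ^ (-(α x)⁻¹) / 2) ^ 2)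
      = ∫ x in (0:ℝ)..t, |θ| ^ (α x) := by
  have hEq : EqOn
      (fun x => ∫ y in Ioi (0:ℝ),
        Real.sin (θ * levyC (α x) ^ (α x)⁻¹ * (if x ∈ Icc (0:ℝ) t then (1:ℝ) else 0)
            * y ^ (-(α x)⁻¹) / 2) ^ 2)
      (fun x => ({x : ℝ | x ≤ t}.indicator (fun x => |θ| ^ (α x)) x) / 2)
      (uIcc 0 1) := by
    rw [uIcc_of_le zero_le_one]
    intro x hx
    have hαx := hαmem x hx
    set u := α x with hu_def
    have hu : 0 < u := lt_of_lt_of_le hc hαx.1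
    have hu2 : u < 2 := lt_of_le_of_lt hαx.2 hd2
    have hKvpos := Kv_pos hu hu2
    simp only
    by_cases hxt : x ∈ Icc (0:ℝ) t
    · have hxle : x ≤ t := hxt.2
      rw [indicator_of_mem (by exact hxle : x ∈ {x : ℝ | x ≤ t})]
      have hCeq := levyC_eq hu hu2
      set b : ℝ := |θ| * levyC u ^ u⁻¹ with hb_def
      have hC_nonneg : 0 ≤ levyC u ^ u⁻¹ := by
        rw [hCeq]; exact Real.rpow_nonneg (inv_nonneg.mpr hKvpos.le) _
      have hb_nonneg : 0 ≤ b := mul_nonneg (abs_nonneg θ) hC_nonneg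
      have hptwise : ∀ y : ℝ,
          Real.sin (θ * levyC u ^ u⁻¹ * (if x ∈ Icc (0:ℝ) t then (1:ℝ) else 0)
            * y ^ (-u⁻¹) / 2) ^ 2 = Real.sin (b * y ^ (-u⁻¹) / 2) ^ 2 := by
        intro y
        rw [if_pos hxt]
        rcases abs_cases θ with ⟨h1, _⟩ | ⟨h1, _⟩
        · rw [hb_def, h1]; ring_nf
        · rw [show θ * levyC u ^ u⁻¹ * 1 * y ^ (-u⁻¹) / 2
              = -(b * y ^ (-u⁻¹) / 2) by rw [hb_def, h1]; ring, Real.sin_neg]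
          ring
      simp_rw [← hu_def, hptwise]
      rw [inner_integral hu hu2 hb_nonneg]
      have hbu : b ^ u = |θ| ^ u * (Kv u)⁻¹ := by
        rw [hb_def, Real.mul_rpow (abs_nonneg θ) hC_nonneg, hCeq,
          ← Real.rpow_mul (inv_nonneg.mpr hKvpos.le), inv_mul_cancel₀ hu.ne', Real.rpow_one]
      rw [hbu]
      field_simp
    · rw [indicator_of_notMem (by
        intro h
        exact hxt ⟨hx.1, h⟩ : x ∉ {x : ℝ | x ≤ t})]
      rw [if_neg hxt]
      simp
  rw [intervalIntegral.integral_congr hEq]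
  have : ∫ x in (0:ℝ)..1, ({x : ℝ | x ≤ t}.indicator (fun x => |θ| ^ (α x)) x) / 2
      = (∫ x in (0:ℝ)..1, {x : ℝ | x ≤ t}.indicator (fun x => |θ| ^ (α x)) x) / 2 :=
    intervalIntegral.integral_div 2 _
  rw [this, intervalIntegral.integral_indicator ht]
  ring
end

section
/- Let 0 < c ≤ d < 2, let p ∈ (d,2), and let (Γ_i)_{i≥1} be the arrival times of a unit-rate Poisson process. Then for every integer i_0 with i_0 > p/c, each expectation E[|ln Γ_i|^p (Γ_i^{−1/c} + Γ_i^{−1/d})^p] is finite for i ≥ i_0, and the series ∑_{i=i_0}^∞ E[|ln Γ_i|^p (Γ_i^{−1/c} + Γ_i^{−1/d})^p] converges. -/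
open MeasureTheory ProbabilityTheory Filter Set

private lemma log_le_aux {p ε y : ℝ} (hp : 0 < p) (hε : 0 < ε) (hy : 0 < y) :
    Real.log y ≤ (p / ε) * y ^ (ε / p) := by
  have h2 : Real.log (y ^ (ε / p)) ≤ y ^ (ε / p) := by
    have := Real.log_le_sub_one_of_pos (Real.rpow_pos_of_pos hy (ε / p))
    linarith
  rw [Real.log_rpow hy] at h2
  have hc : (p / ε) * ((ε / p) * Real.log y) = Real.log y := by field_simp
  calc Real.log y = (p / ε) * ((ε / p) * Real.log y) := hc.symm
    _ ≤ (p / ε) * y ^ (ε / p) := by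
        apply mul_le_mul_of_nonneg_left h2 (by positivity)

private lemma abs_log_rpow_le_of_le_one {p ε x : ℝ} (hp : 0 < p) (hε : 0 < ε)
    (hx : 0 < x) (hx1 : x ≤ 1) : |Real.log x| ^ p ≤ (p / ε) ^ p * x ^ (-ε) := by
  have h1 : |Real.log x| = Real.log x⁻¹ := by
    rw [Real.log_inv, abs_of_nonpos (Real.log_nonpos hx.le hx1)]
  have key : |Real.log x| ≤ (p / ε) * x ^ (-(ε / p)) := by
    rw [h1]
    refine (log_le_aux hp hε (inv_pos.mpr hx)).trans ?_
    rw [Real.inv_rpow hx.le, ← Real.rpow_neg hx.le]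
  calc |Real.log x| ^ p ≤ ((p / ε) * x ^ (-(ε / p))) ^ p :=
        Real.rpow_le_rpow (abs_nonneg _) key hp.le
    _ = (p / ε) ^ p * (x ^ (-(ε / p))) ^ p :=
        Real.mul_rpow (by positivity) (Real.rpow_nonneg hx.le _)
    _ = (p / ε) ^ p * x ^ (-ε) := by
        have he : (-(ε / p)) * p = -ε := by field_simp
        rw [← Real.rpow_mul hx.le, he]

private lemma abs_log_rpow_le_of_one_le {p ε x : ℝ} (hp : 0 < p) (hε : 0 < ε)
    (hx : 1 ≤ x) : |Real.log x| ^ p ≤ (p / ε) ^ p * x ^ ε := by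
  have hx0 : 0 < x := lt_of_lt_of_le one_pos hx
  have key : |Real.log x| ≤ (p / ε) * x ^ (ε / p) := by
    rw [abs_of_nonneg (Real.log_nonneg hx)]
    exact log_le_aux hp hε hx0
  calc |Real.log x| ^ p ≤ ((p / ε) * x ^ (ε / p)) ^ p :=
        Real.rpow_le_rpow (abs_nonneg _) key hp.le
    _ = (p / ε) ^ p * (x ^ (ε / p)) ^ p :=
        Real.mul_rpow (by positivity) (Real.rpow_nonneg hx0.le _)
    _ = (p / ε) ^ p * x ^ ε := by
        rw [← Real.rpow_mul hx0.le, div_mul_cancel₀ ε hp.ne']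

set_option maxHeartbeats 1000000 in
/-- for `0 < c ≤ d < 2`, `p ∈ (d,2)` and `(Γ_i)` the arrival times of a unit-rate
Poisson process, for every integer `i₀ > p/c` the expectations
`E[|ln Γ_i|^p (Γ_i^{-1/c} + Γ_i^{-1/d})^p]` are finite for `i ≥ i₀` and their series over
`i ≥ i₀` converges. -/
theorem stmt14
    {Ω : Type*} [MeasureSpace Ω] [IsProbabilityMeasure (ℙ : Measure Ω)]
    (E Γ : ℕ → Ω → ℝ)
    (hmE : ∀ i, Measurable (E i))
    (hEexp : ∀ i, 1 ≤ i → Measure.map (E i) ℙ = expMeasure 1)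
    (hIndep : iIndepFun E ℙ)
    (hΓ : ∀ i ω, Γ i ω = ∑ j ∈ Finset.Icc 1 i, E j ω)
    (c d p : ℝ) (hc : 0 < c) (hcd : c ≤ d) (hd2 : d < 2) (hp : p ∈ Ioo d 2)
    (i₀ : ℕ) (hi₀ : p / c < (i₀ : ℝ)) :
    (∀ i : ℕ, i₀ ≤ i → Integrable
        (fun ω => |Real.log (Γ i ω)| ^ p * (Γ i ω ^ (-c⁻¹) + Γ i ω ^ (-d⁻¹)) ^ p) ℙ) ∧
      Summable (fun i : ℕ =>
        if i₀ ≤ i then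
          ∫ ω, |Real.log (Γ i ω)| ^ p * (Γ i ω ^ (-c⁻¹) + Γ i ω ^ (-d⁻¹)) ^ p ∂ℙ
        else 0) := by
  classical
  -- basic positivity facts
  have hd0 : 0 < d := lt_of_lt_of_le hc hcd
  obtain ⟨hdp, hp2⟩ := hp
  have hp0 : 0 < p := hd0.trans hdp
  have hpc0 : 0 < p / c := div_pos hp0 hc
  have hi₀R : 0 < (i₀ : ℝ) := hpc0.trans hi₀
  have hi₀1 : 1 ≤ i₀ := by exact_mod_cast Nat.one_le_iff_ne_zero.mpr (by
    rintro rfl; simp at hi₀R)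
  -- constants
  obtain ⟨q1, hq1l, hq1u⟩ : ∃ q, p / c < q ∧ q < (i₀ : ℝ) :=
    ⟨(p / c + i₀) / 2, by linarith, by linarith⟩
  have hq1pos : 0 < q1 := hpc0.trans hq1l
  obtain ⟨θ, hθ0, hθ1, hθa⟩ : ∃ θ : ℝ, 0 < θ ∧ θ < 1 ∧ q1 < θ * i₀ := by
    refine ⟨(q1 + i₀) / (2 * i₀), by positivity, ?_, ?_⟩
    · rw [div_lt_one (by positivity)]; linarith
    · have h : (q1 + (i₀:ℝ)) / (2 * i₀) * i₀ = (q1 + i₀) / 2 := by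
        field_simp
      rw [h]; linarith
  have hpd1 : 1 < p / d := (one_lt_div hd0).2 hdp
  obtain ⟨q2, hq2l, hq2u⟩ : ∃ q, 1 < q ∧ q < p / d :=
    ⟨(1 + p / d) / 2, by linarith, by linarith⟩
  have hq2pos : 0 < q2 := one_pos.trans hq2l
  set β : ℝ := 1 - Real.exp (-1) with hβdef
  have hβ0 : 0 < β := by
    have : Real.exp (-1) < 1 := Real.exp_lt_one_iff.mpr (by norm_num)
    simp only [hβdef]; linarith
  have hβ1 : β < 1 := by
    have := Real.exp_pos (-1); simp only [hβdef]; linarith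
  set γ : ℝ := β ^ (1 - θ) with hγdef
  have hγ0 : 0 < γ := Real.rpow_pos_of_pos hβ0 _
  have hγ1 : γ < 1 := Real.rpow_lt_one hβ0.le hβ1 (by linarith)
  set ρ : ℝ := 1 - β * Real.exp (-1) with hρdef
  have hρ0 : 0 < ρ := by
    have he1 : Real.exp (-1) < 1 := Real.exp_lt_one_iff.mpr (by norm_num)
    have he0 : 0 < Real.exp (-1) := Real.exp_pos _
    simp only [hρdef]; nlinarith
  have hρ1 : ρ < 1 := by
    have := mul_pos hβ0 (Real.exp_pos (-1)); simp only [hρdef]; linarith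
  set σ : ℝ := ρ ^ ((1:ℝ)/2) with hσdef
  have hσ0 : 0 < σ := Real.rpow_pos_of_pos hρ0 _
  have hσ1 : σ < 1 := Real.rpow_lt_one hρ0.le hρ1 (by norm_num)
  set L : ℝ := -Real.log ρ with hLdef
  have hL0 : 0 < L := by
    have := Real.log_neg hρ0 hρ1; simp only [hLdef]; linarith
  set a₀ : ℝ := θ * i₀ / q1 with ha₀def
  have ha₀1 : 1 < a₀ := (one_lt_div hq1pos).2 hθa
  set A1 : ℝ := 1 + 1 / (a₀ - 1) with hA1def
  have hA1pos : 0 < A1 := by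
    have : 0 < 1 / (a₀ - 1) := by
      apply div_pos one_pos; linarith
    simp only [hA1def]; linarith
  set K1 : ℝ := (p / (q1 - p / c)) ^ p * 2 ^ p with hK1def
  set K2 : ℝ := (p / (p / d - q2)) ^ p * 2 ^ p with hK2def
  have hK1pos : 0 ≤ K1 :=
    mul_nonneg (Real.rpow_nonneg (div_nonneg hp0.le (by linarith)) _)
      (Real.rpow_nonneg (by norm_num) _)
  have hK2pos : 0 ≤ K2 :=
    mul_nonneg (Real.rpow_nonneg (div_nonneg hp0.le (by linarith)) _)
      (Real.rpow_nonneg (by norm_num) _)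
  set b : ℕ → ℝ := fun i => K1 * A1 * γ ^ i +
    K2 * ((L/2) ^ (-q2) * (i:ℝ) ^ (-q2) + σ ^ i) with hbdef
  have hbnonneg : ∀ i, 0 ≤ b i := by
    intro i
    have h1 : (0:ℝ) ≤ γ ^ i := pow_nonneg hγ0.le _
    have h2 : (0:ℝ) ≤ (L/2) ^ (-q2) * (i:ℝ) ^ (-q2) + σ ^ i := by
      apply add_nonneg (mul_nonneg (Real.rpow_nonneg (div_nonneg hL0.le (by norm_num)) _)
        (Real.rpow_nonneg (Nat.cast_nonneg i) _)) (pow_nonneg hσ0.le _)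
    simp only [hbdef]
    apply add_nonneg (mul_nonneg (mul_nonneg hK1pos hA1pos.le) h1) (mul_nonneg hK2pos h2)
  -- law of E j
  have hlawIic : ∀ j, 1 ≤ j → ∀ u : ℝ, 0 ≤ u →
      ℙ {ω | E j ω ≤ u} = ENNReal.ofReal (1 - Real.exp (-u)) := by
    intro j hj u hu
    have hP : IsProbabilityMeasure (expMeasure 1) := isProbabilityMeasure_expMeasure one_pos
    have h1 : {ω | E j ω ≤ u} = E j ⁻¹' (Iic u) := rfl
    rw [h1, ← Measure.map_apply (hmE j) measurableSet_Iic, hEexp j hj,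
      ← ofReal_cdf (expMeasure 1) u]
    have h2 : cdf (expMeasure 1) u = cdf (expMeasure 1) u := rfl
    rw [h2, cdf_expMeasure_eq one_pos, if_pos hu, one_mul]
  -- almost sure positivity
  have hEpos : ∀ᵐ ω ∂(ℙ : Measure Ω), ∀ j, 1 ≤ j → 0 < E j ω := by
    rw [ae_all_iff]
    intro j
    by_cases hj : 1 ≤ j
    · have h0 : ℙ {ω | E j ω ≤ 0} = 0 := by
        rw [hlawIic j hj 0 le_rfl]; simp
      refine ae_iff.mpr ?_
      have hset : {ω | ¬(1 ≤ j → 0 < E j ω)} = {ω | E j ω ≤ 0} := by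
        ext ω; simp [hj, not_lt]
      rw [hset]; exact h0
    · exact Eventually.of_forall (fun ω h => absurd h hj)
  have hΓmeas : ∀ i, Measurable (Γ i) := by
    intro i
    have : Γ i = fun ω => ∑ j ∈ Finset.Icc 1 i, E j ω := funext (hΓ i)
    rw [this]; exact Finset.measurable_sum _ fun j _ => hmE j
  have hΓpos : ∀ i, 1 ≤ i → ∀ᵐ ω ∂(ℙ : Measure Ω), 0 < Γ i ω := by
    intro i hi
    filter_upwards [hEpos] with ω hω
    rw [hΓ]
    exact Finset.sum_pos (fun j hj => hω j (Finset.mem_Icc.mp hj).1)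
      ⟨1, Finset.mem_Icc.mpr ⟨le_rfl, hi⟩⟩
  -- tail bound from independence: ℙ(Γ i ≤ u) ≤ (1 - e^{-u})^i
  have hT1 : ∀ i : ℕ, ∀ u : ℝ, 0 ≤ u →
      ℙ {ω | Γ i ω ≤ u} ≤ ENNReal.ofReal ((1 - Real.exp (-u)) ^ i) := by
    intro i u hu
    set N : Set Ω := {ω | ¬ ∀ j ∈ Finset.Icc 1 i, 0 < E j ω} with hNdef
    have hNnull : ℙ N = 0 := by
      have h := hEpos.mono (fun ω h => fun j (hj : j ∈ Finset.Icc 1 i) =>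
        h j (Finset.mem_Icc.mp hj).1)
      rw [ae_iff] at h
      exact h
    have hsub : {ω | Γ i ω ≤ u} ⊆ (⋂ j ∈ Finset.Icc 1 i, E j ⁻¹' Iic u) ∪ N := by
      intro ω hω
      by_cases hωN : ω ∈ N
      · exact Or.inr hωN
      · left
        simp only [hNdef, mem_setOf_eq, not_not] at hωN
        simp only [mem_iInter, mem_preimage, mem_Iic]
        intro j hj
        calc E j ω ≤ ∑ k ∈ Finset.Icc 1 i, E k ω :=
              Finset.single_le_sum (fun k hk => (hωN k hk).le) hj
          _ = Γ i ω := (hΓ i ω).symm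
          _ ≤ u := hω
    have hexp1 : 0 ≤ 1 - Real.exp (-u) := by
      have : Real.exp (-u) ≤ 1 := Real.exp_le_one_iff.mpr (by linarith)
      linarith
    calc ℙ {ω | Γ i ω ≤ u} ≤ ℙ ((⋂ j ∈ Finset.Icc 1 i, E j ⁻¹' Iic u) ∪ N) :=
          measure_mono hsub
      _ ≤ ℙ (⋂ j ∈ Finset.Icc 1 i, E j ⁻¹' Iic u) + ℙ N := measure_union_le _ _
      _ = ℙ (⋂ j ∈ Finset.Icc 1 i, E j ⁻¹' Iic u) := by rw [hNnull, add_zero]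
      _ = ∏ j ∈ Finset.Icc 1 i, ℙ (E j ⁻¹' Iic u) :=
          hIndep.meas_biInter (fun j _ => ⟨Iic u, measurableSet_Iic, rfl⟩)
      _ = ∏ j ∈ Finset.Icc 1 i, ENNReal.ofReal (1 - Real.exp (-u)) :=
          Finset.prod_congr rfl (fun j hj => hlawIic j (Finset.mem_Icc.mp hj).1 u hu)
      _ = ENNReal.ofReal (1 - Real.exp (-u)) ^ i := by
          rw [Finset.prod_const, Nat.card_Icc]; norm_num
      _ = ENNReal.ofReal ((1 - Real.exp (-u)) ^ i) := (ENNReal.ofReal_pow hexp1 i).symm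
  -- interpolated tail bound
  have hT1' : ∀ i : ℕ, 1 ≤ i → ∀ u : ℝ, 0 ≤ u → u ≤ 1 →
      ℙ {ω | Γ i ω ≤ u} ≤ ENNReal.ofReal (γ ^ i * u ^ (θ * (i:ℝ))) := by
    intro i hi u hu0 hu1
    refine (hT1 i u hu0).trans (ENNReal.ofReal_le_ofReal ?_)
    have hexp1 : 0 ≤ 1 - Real.exp (-u) := by
      have : Real.exp (-u) ≤ 1 := Real.exp_le_one_iff.mpr (by linarith)
      linarith
    have h1 : 1 - Real.exp (-u) ≤ u ^ θ * β ^ (1 - θ) := by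
      rcases eq_or_lt_of_le hu0 with h | h
      · rw [← h]
        simp [Real.zero_rpow hθ0.ne']
      · have hm : 0 < min u β := lt_min h hβ0
        have hle : 1 - Real.exp (-u) ≤ min u β := by
          refine le_min ?_ ?_
          · linarith [Real.add_one_le_exp (-u)]
          · have : Real.exp (-1) ≤ Real.exp (-u) := Real.exp_le_exp.mpr (by linarith)
            simp only [hβdef]; linarith
        calc 1 - Real.exp (-u) ≤ min u β := hle
          _ = (min u β) ^ θ * (min u β) ^ (1 - θ) := by
              rw [← Real.rpow_add hm, add_sub_cancel, Real.rpow_one]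
          _ ≤ u ^ θ * β ^ (1 - θ) := by
              apply mul_le_mul (Real.rpow_le_rpow hm.le (min_le_left _ _) hθ0.le)
                (Real.rpow_le_rpow hm.le (min_le_right _ _) (by linarith))
                (Real.rpow_nonneg hm.le _) (Real.rpow_nonneg (hm.le.trans (min_le_left _ _)) _)
    calc (1 - Real.exp (-u)) ^ i ≤ (u ^ θ * β ^ (1 - θ)) ^ i := pow_le_pow_left₀ hexp1 h1 i
      _ = γ ^ i * u ^ (θ * (i:ℝ)) := by
          rw [mul_pow, mul_comm]
          congr 1
          rw [← Real.rpow_natCast (u ^ θ) i, ← Real.rpow_mul hu0]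
  -- Chernoff bound
  have hT2 : ∀ i : ℕ, 1 ≤ i → ∀ u : ℝ,
      ℙ {ω | Γ i ω ≤ u} ≤ ENNReal.ofReal (Real.exp u * ρ ^ i) := by
    have hmgfE : ∀ j, 1 ≤ j → mgf (E j) ℙ (-1) ≤ ρ := by
      intro j hj
      have hEj_nonneg : ∀ᵐ ω ∂(ℙ : Measure Ω), 0 ≤ E j ω :=
        hEpos.mono fun ω h => (h j hj).le
      have hmeas : Measurable fun ω => Real.exp (-1 * E j ω) :=
        ((hmE j).const_mul (-1)).exp
      have hint : Integrable (fun ω => Real.exp (-1 * E j ω)) ℙ := by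
        refine Integrable.mono' (integrable_const 1) hmeas.aestronglyMeasurable ?_
        filter_upwards [hEj_nonneg] with ω h
        rw [Real.norm_eq_abs, abs_of_nonneg (Real.exp_pos _).le]
        exact Real.exp_le_one_iff.mpr (by linarith)
      set S : Set Ω := E j ⁻¹' (Ici 1) with hSdef
      have hSm : MeasurableSet S := (hmE j) measurableSet_Ici
      have hPS : Real.exp (-1) ≤ (ℙ S).toReal := by
        have hcompl : ℙ Sᶜ ≤ ENNReal.ofReal (1 - Real.exp (-1)) := by
          have hsub : Sᶜ ⊆ {ω | E j ω ≤ 1} := by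
            intro ω h
            simp only [hSdef, mem_compl_iff, mem_preimage, mem_Ici, not_le] at h
            exact le_of_lt h
          exact (measure_mono hsub).trans (hlawIic j hj 1 zero_le_one).le
        have h1 : ℙ Sᶜᶜ = 1 - ℙ Sᶜ := prob_compl_eq_one_sub hSm.compl
        rw [compl_compl] at h1
        have h2 : (ℙ Sᶜ).toReal ≤ 1 - Real.exp (-1) := by
          apply ENNReal.toReal_le_of_le_ofReal ?_ hcompl
          have := (Real.exp_lt_one_iff (x := -1)).mpr (by norm_num)
          linarith
        have h3 : (ℙ S).toReal = 1 - (ℙ Sᶜ).toReal := by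
          rw [h1, ENNReal.toReal_sub_of_le prob_le_one ENNReal.one_ne_top, ENNReal.toReal_one]
        rw [h3]; linarith
      have hβe : β * (ℙ S).toReal ≤ 1 - mgf (E j) ℙ (-1) := by
        have hint1 : Integrable (fun ω => 1 - Real.exp (-1 * E j ω)) ℙ :=
          (integrable_const 1).sub hint
        have e1 : ∫ ω in S, β ∂ℙ = (ℙ S).toReal * β := by
          rw [setIntegral_const, smul_eq_mul]; rfl
        have e2 : ∫ ω in S, β ∂ℙ ≤ ∫ ω in S, (1 - Real.exp (-1 * E j ω)) ∂ℙ := by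
          refine setIntegral_mono_on (integrable_const β).integrableOn
            hint1.integrableOn hSm (fun ω hω => ?_)
          have h1 : (1:ℝ) ≤ E j ω := hω
          have h2 : Real.exp (-1 * E j ω) ≤ Real.exp (-1) :=
            Real.exp_le_exp.mpr (by linarith)
          simp only [hβdef]; linarith
        have e3 : ∫ ω in S, (1 - Real.exp (-1 * E j ω)) ∂ℙ ≤
            ∫ ω, (1 - Real.exp (-1 * E j ω)) ∂ℙ := by
          refine setIntegral_le_integral hint1 ?_
          filter_upwards [hEj_nonneg] with ω h
          have : Real.exp (-1 * E j ω) ≤ 1 := Real.exp_le_one_iff.mpr (by linarith)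
          simp only [Pi.zero_apply]; linarith
        have e4 : ∫ ω, (1 - Real.exp (-1 * E j ω)) ∂ℙ = 1 - mgf (E j) ℙ (-1) := by
          rw [integral_sub (integrable_const 1) hint, integral_const]
          simp [mgf]
        rw [mul_comm] at e1
        linarith
      have h5 : β * Real.exp (-1) ≤ β * (ℙ S).toReal :=
        mul_le_mul_of_nonneg_left hPS hβ0.le
      simp only [hρdef]; linarith
    have hmgfΓ : ∀ k : ℕ, mgf (Γ k) ℙ (-1) ≤ ρ ^ k := by
      intro k
      have hfun : Γ k = ∑ j ∈ Finset.Icc 1 k, E j := by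
        funext ω; rw [hΓ]; simp
      rw [hfun, hIndep.mgf_sum hmE (Finset.Icc 1 k)]
      calc ∏ j ∈ Finset.Icc 1 k, mgf (E j) ℙ (-1)
          ≤ ∏ j ∈ Finset.Icc 1 k, ρ :=
            Finset.prod_le_prod (fun j _ => mgf_nonneg)
              (fun j hj => hmgfE j (Finset.mem_Icc.mp hj).1)
        _ = ρ ^ k := by rw [Finset.prod_const, Nat.card_Icc]; norm_num
    intro i hi u
    have hintΓ : Integrable (fun ω => Real.exp (-1 * Γ i ω)) ℙ := by
      refine Integrable.mono' (integrable_const 1)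
        (((hΓmeas i).const_mul (-1)).exp).aestronglyMeasurable ?_
      filter_upwards [hΓpos i hi] with ω h
      rw [Real.norm_eq_abs, abs_of_nonneg (Real.exp_pos _).le]
      exact Real.exp_le_one_iff.mpr (by linarith)
    have h := measure_le_le_exp_mul_mgf (μ := ℙ) (X := Γ i) u
      (by norm_num : (-1:ℝ) ≤ 0) hintΓ
    rw [← ENNReal.ofReal_toReal (measure_ne_top ℙ {ω | Γ i ω ≤ u})]
    apply ENNReal.ofReal_le_ofReal
    refine h.trans ?_
    have hh : -(-1:ℝ) * u = u := by ring
    rw [hh]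
    exact mul_le_mul_of_nonneg_left (hmgfΓ i) (Real.exp_pos u).le
  -- pointwise bound on the integrand
  have hgbound1 : ∀ x : ℝ, 0 < x → x ≤ 1 →
      |Real.log x| ^ p * (x ^ (-c⁻¹) + x ^ (-d⁻¹)) ^ p ≤ K1 * x ^ (-q1) := by
    intro x hx hx1
    have hε1 : 0 < q1 - p / c := by linarith
    have hlog : |Real.log x| ^ p ≤ (p / (q1 - p / c)) ^ p * x ^ (-(q1 - p / c)) :=
      abs_log_rpow_le_of_le_one hp0 hε1 hx hx1
    have hexp : -c⁻¹ ≤ -d⁻¹ := by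
      have : d⁻¹ ≤ c⁻¹ := by
        apply inv_anti₀ hc hcd
      linarith
    have hsum : x ^ (-c⁻¹) + x ^ (-d⁻¹) ≤ 2 * x ^ (-c⁻¹) := by
      have h1 : x ^ (-d⁻¹) ≤ x ^ (-c⁻¹) :=
        Real.rpow_le_rpow_of_exponent_ge hx hx1 hexp
      linarith
    have hsumnn : 0 ≤ x ^ (-c⁻¹) + x ^ (-d⁻¹) :=
      add_nonneg (Real.rpow_nonneg hx.le _) (Real.rpow_nonneg hx.le _)
    have hpow : (x ^ (-c⁻¹) + x ^ (-d⁻¹)) ^ p ≤ 2 ^ p * x ^ (-(p/c)) := by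
      calc (x ^ (-c⁻¹) + x ^ (-d⁻¹)) ^ p ≤ (2 * x ^ (-c⁻¹)) ^ p :=
            Real.rpow_le_rpow hsumnn hsum hp0.le
        _ = 2 ^ p * (x ^ (-c⁻¹)) ^ p :=
            Real.mul_rpow (by norm_num) (Real.rpow_nonneg hx.le _)
        _ = 2 ^ p * x ^ (-(p/c)) := by
            rw [← Real.rpow_mul hx.le]
            congr 1
            field_simp
    calc |Real.log x| ^ p * (x ^ (-c⁻¹) + x ^ (-d⁻¹)) ^ p
        ≤ ((p / (q1 - p / c)) ^ p * x ^ (-(q1 - p / c))) * (2 ^ p * x ^ (-(p/c))) := by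
          apply mul_le_mul hlog hpow (Real.rpow_nonneg hsumnn _)
            (mul_nonneg (Real.rpow_nonneg (by positivity) _) (Real.rpow_nonneg hx.le _))
      _ = K1 * x ^ (-q1) := by
          rw [hK1def]
          rw [show ((p / (q1 - p / c)) ^ p * x ^ (-(q1 - p / c))) * (2 ^ p * x ^ (-(p/c)))
            = ((p / (q1 - p / c)) ^ p * 2 ^ p) * (x ^ (-(q1 - p / c)) * x ^ (-(p/c))) by ring]
          rw [← Real.rpow_add hx]
          congr 1
          ring_nf
  have hgbound2 : ∀ x : ℝ, 1 ≤ x →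
      |Real.log x| ^ p * (x ^ (-c⁻¹) + x ^ (-d⁻¹)) ^ p ≤ K2 * x ^ (-q2) := by
    intro x hx1
    have hx : 0 < x := lt_of_lt_of_le one_pos hx1
    have hε2 : 0 < p / d - q2 := by linarith
    have hlog : |Real.log x| ^ p ≤ (p / (p / d - q2)) ^ p * x ^ (p / d - q2) :=
      abs_log_rpow_le_of_one_le hp0 hε2 hx1
    have hexp : -c⁻¹ ≤ -d⁻¹ := by
      have : d⁻¹ ≤ c⁻¹ := by
        apply inv_anti₀ hc hcd
      linarith
    have hsum : x ^ (-c⁻¹) + x ^ (-d⁻¹) ≤ 2 * x ^ (-d⁻¹) := by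
      have h1 : x ^ (-c⁻¹) ≤ x ^ (-d⁻¹) :=
        Real.rpow_le_rpow_of_exponent_le hx1 hexp
      linarith
    have hsumnn : 0 ≤ x ^ (-c⁻¹) + x ^ (-d⁻¹) :=
      add_nonneg (Real.rpow_nonneg hx.le _) (Real.rpow_nonneg hx.le _)
    have hpow : (x ^ (-c⁻¹) + x ^ (-d⁻¹)) ^ p ≤ 2 ^ p * x ^ (-(p/d)) := by
      calc (x ^ (-c⁻¹) + x ^ (-d⁻¹)) ^ p ≤ (2 * x ^ (-d⁻¹)) ^ p :=
            Real.rpow_le_rpow hsumnn hsum hp0.le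
        _ = 2 ^ p * (x ^ (-d⁻¹)) ^ p :=
            Real.mul_rpow (by norm_num) (Real.rpow_nonneg hx.le _)
        _ = 2 ^ p * x ^ (-(p/d)) := by
            rw [← Real.rpow_mul hx.le]
            congr 1
            field_simp
    calc |Real.log x| ^ p * (x ^ (-c⁻¹) + x ^ (-d⁻¹)) ^ p
        ≤ ((p / (p / d - q2)) ^ p * x ^ (p / d - q2)) * (2 ^ p * x ^ (-(p/d))) := by
          apply mul_le_mul hlog hpow (Real.rpow_nonneg hsumnn _)
            (mul_nonneg (Real.rpow_nonneg (by positivity) _) (Real.rpow_nonneg hx.le _))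
      _ = K2 * x ^ (-q2) := by
          rw [hK2def]
          rw [show ((p / (p / d - q2)) ^ p * x ^ (p / d - q2)) * (2 ^ p * x ^ (-(p/d)))
            = ((p / (p / d - q2)) ^ p * 2 ^ p) * (x ^ (p / d - q2) * x ^ (-(p/d))) by ring]
          rw [← Real.rpow_add hx]
          congr 1
          ring_nf
  -- the main per-index estimate
  have key : ∀ i : ℕ, i₀ ≤ i →
      Integrable (fun ω => |Real.log (Γ i ω)| ^ p *
        (Γ i ω ^ (-c⁻¹) + Γ i ω ^ (-d⁻¹)) ^ p) ℙ ∧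
      0 ≤ (∫ ω, |Real.log (Γ i ω)| ^ p * (Γ i ω ^ (-c⁻¹) + Γ i ω ^ (-d⁻¹)) ^ p ∂ℙ) ∧
      (∫ ω, |Real.log (Γ i ω)| ^ p * (Γ i ω ^ (-c⁻¹) + Γ i ω ^ (-d⁻¹)) ^ p ∂ℙ) ≤ b i := by
    intro i hi
    have hi1 : 1 ≤ i := le_trans hi₀1 hi
    have hXm : Measurable (Γ i) := hΓmeas i
    have hXpos : ∀ᵐ ω ∂(ℙ : Measure Ω), 0 < Γ i ω := hΓpos i hi1
    set f1 : Ω → ℝ := fun ω => if Γ i ω ≤ 1 then Γ i ω ^ (-q1) else 0 with hf1def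
    set f2 : Ω → ℝ := fun ω => if 1 < Γ i ω then Γ i ω ^ (-q2) else 0 with hf2def
    have hf1m : Measurable f1 :=
      Measurable.ite (measurableSet_le hXm measurable_const)
        (hXm.pow_const _) measurable_const
    have hf2m : Measurable f2 :=
      Measurable.ite (measurableSet_lt measurable_const hXm)
        (hXm.pow_const _) measurable_const
    have hf1nn : 0 ≤ᵐ[(ℙ : Measure Ω)] f1 := by
      filter_upwards [hXpos] with ω hω
      simp only [hf1def, Pi.zero_apply]
      split_ifs
      · exact Real.rpow_nonneg hω.le _
      · exact le_rfl
    have hf2nn : 0 ≤ᵐ[(ℙ : Measure Ω)] f2 := by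
      filter_upwards [hXpos] with ω hω
      simp only [hf2def, Pi.zero_apply]
      split_ifs
      · exact Real.rpow_nonneg hω.le _
      · exact le_rfl
    have hgm : Measurable (fun ω => |Real.log (Γ i ω)| ^ p *
        (Γ i ω ^ (-c⁻¹) + Γ i ω ^ (-d⁻¹)) ^ p) :=
      (hXm.log.abs.pow_const p).mul
        (((hXm.pow_const _).add (hXm.pow_const _)).pow_const p)
    have hgnn : 0 ≤ᵐ[(ℙ : Measure Ω)] (fun ω => |Real.log (Γ i ω)| ^ p *
        (Γ i ω ^ (-c⁻¹) + Γ i ω ^ (-d⁻¹)) ^ p) := by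
      filter_upwards [hXpos] with ω hω
      have h1 : 0 ≤ Γ i ω ^ (-c⁻¹) + Γ i ω ^ (-d⁻¹) :=
        add_nonneg (Real.rpow_nonneg hω.le _) (Real.rpow_nonneg hω.le _)
      exact mul_nonneg (Real.rpow_nonneg (abs_nonneg _) _) (Real.rpow_nonneg h1 _)
    have hgle : ∀ᵐ ω ∂(ℙ : Measure Ω), |Real.log (Γ i ω)| ^ p *
        (Γ i ω ^ (-c⁻¹) + Γ i ω ^ (-d⁻¹)) ^ p ≤ K1 * f1 ω + K2 * f2 ω := by
      filter_upwards [hXpos] with ω hω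
      by_cases h1 : Γ i ω ≤ 1
      · have hb := hgbound1 (Γ i ω) hω h1
        simp only [hf1def, hf2def, if_pos h1, if_neg (not_lt.mpr h1), mul_zero, add_zero]
        exact hb
      · have hb := hgbound2 (Γ i ω) (le_of_not_ge h1)
        simp only [hf1def, hf2def, if_neg h1, if_pos (not_le.mp h1), mul_zero, zero_add]
        exact hb
    -- first piece
    have hI1 : ∫⁻ ω, ENNReal.ofReal (f1 ω) ∂ℙ ≤ ENNReal.ofReal (A1 * γ ^ i) := by
      rw [lintegral_eq_lintegral_meas_lt ℙ hf1nn hf1m.aemeasurable]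
      have claimA : ∀ t ∈ Ioc (0:ℝ) 1, ℙ {ω | t < f1 ω} ≤ ENNReal.ofReal (γ ^ i) := by
        intro t ht
        have hsub : {ω | t < f1 ω} ⊆ {ω | Γ i ω ≤ 1} := by
          intro ω hω
          simp only [hf1def, mem_setOf_eq] at hω ⊢
          by_contra hb
          rw [if_neg hb] at hω
          linarith [ht.1]
        refine (measure_mono hsub).trans ?_
        have h := hT1' i hi1 1 zero_le_one le_rfl
        simpa using h
      have claimB : ∀ t ∈ Ioi (1:ℝ), ℙ {ω | t < f1 ω} ≤
          ENNReal.ofReal (γ ^ i) * ENNReal.ofReal (t ^ (-a₀)) := by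
        intro t ht
        have ht1 : (1:ℝ) < t := ht
        have ht0 : (0:ℝ) < t := one_pos.trans ht1
        have hq1inv : -q1⁻¹ < 0 := neg_neg_iff_pos.mpr (inv_pos.mpr hq1pos)
        have hu0 : 0 < t ^ (-q1⁻¹) := Real.rpow_pos_of_pos ht0 _
        have hu1 : t ^ (-q1⁻¹) ≤ 1 :=
          Real.rpow_le_one_of_one_le_of_nonpos ht1.le hq1inv.le
        have hsub : {ω | t < f1 ω} ⊆ {ω | Γ i ω ≤ t ^ (-q1⁻¹)} ∪ {ω | ¬ 0 < Γ i ω} := by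
          intro ω hω
          by_cases hpos : 0 < Γ i ω
          · left
            have hb : Γ i ω ≤ 1 := by
              by_contra hb
              simp only [hf1def, mem_setOf_eq, if_neg hb] at hω
              linarith
            have hlt : t < Γ i ω ^ (-q1) := by
              simpa only [hf1def, mem_setOf_eq, if_pos hb] using hω
            have h2 : (Γ i ω ^ (-q1)) ^ (-q1⁻¹) < t ^ (-q1⁻¹) :=
              Real.rpow_lt_rpow_of_neg ht0 hlt hq1inv
            rw [← Real.rpow_mul hpos.le,
              show (-q1) * (-q1⁻¹) = 1 by field_simp, Real.rpow_one] at h2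
            exact h2.le
          · exact Or.inr hpos
        have hnull : ℙ {ω | ¬ 0 < Γ i ω} = 0 := ae_iff.mp hXpos
        have hmeas2 : ℙ {ω | t < f1 ω} ≤ ℙ {ω | Γ i ω ≤ t ^ (-q1⁻¹)} := by
          calc ℙ {ω | t < f1 ω} ≤ ℙ ({ω | Γ i ω ≤ t ^ (-q1⁻¹)} ∪ {ω | ¬ 0 < Γ i ω}) :=
                measure_mono hsub
            _ ≤ ℙ {ω | Γ i ω ≤ t ^ (-q1⁻¹)} + ℙ {ω | ¬ 0 < Γ i ω} := measure_union_le _ _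
            _ = ℙ {ω | Γ i ω ≤ t ^ (-q1⁻¹)} := by rw [hnull, add_zero]
        refine hmeas2.trans ((hT1' i hi1 _ hu0.le hu1).trans ?_)
        rw [← ENNReal.ofReal_mul (pow_nonneg hγ0.le i)]
        apply ENNReal.ofReal_le_ofReal
        apply mul_le_mul_of_nonneg_left ?_ (pow_nonneg hγ0.le i)
        rw [← Real.rpow_mul ht0.le]
        apply Real.rpow_le_rpow_of_exponent_le ht1.le
        have hcast : (i₀:ℝ) ≤ (i:ℝ) := Nat.cast_le.mpr hi
        rw [ha₀def]
        rw [show -q1⁻¹ * (θ * (i:ℝ)) = -(θ * (i:ℝ) / q1) by ring, neg_le_neg_iff]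
        gcongr
      rw [show Ioi (0:ℝ) = Ioc 0 1 ∪ Ioi 1 from (Ioc_union_Ioi_eq_Ioi zero_le_one).symm,
        lintegral_union measurableSet_Ioi (Ioc_disjoint_Ioi le_rfl)]
      have hb1 : ∫⁻ t in Ioc (0:ℝ) 1, ℙ {ω | t < f1 ω} ≤ ENNReal.ofReal (γ ^ i) := by
        calc ∫⁻ t in Ioc (0:ℝ) 1, ℙ {ω | t < f1 ω}
            ≤ ∫⁻ _ in Ioc (0:ℝ) 1, ENNReal.ofReal (γ ^ i) :=
              setLIntegral_mono' measurableSet_Ioc claimA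
          _ = ENNReal.ofReal (γ ^ i) * volume (Ioc (0:ℝ) 1) := setLIntegral_const _ _
          _ = ENNReal.ofReal (γ ^ i) := by simp [Real.volume_Ioc]
      have hJ : ∫⁻ t in Ioi (1:ℝ), ENNReal.ofReal (t ^ (-a₀)) =
          ENNReal.ofReal (1 / (a₀ - 1)) := by
        have hintJ : IntegrableOn (fun t : ℝ => t ^ (-a₀)) (Ioi 1) :=
          integrableOn_Ioi_rpow_of_lt (by linarith) one_pos
        rw [← ofReal_integral_eq_lintegral_ofReal hintJ ?_]
        · rw [integral_Ioi_rpow_of_lt (by linarith) one_pos, Real.one_rpow,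
            show -a₀ + 1 = -(a₀ - 1) by ring, div_neg, neg_div, neg_neg]
        · refine (ae_restrict_iff' measurableSet_Ioi).mpr (ae_of_all _ fun t ht => ?_)
          exact Real.rpow_nonneg (le_of_lt (lt_trans one_pos ht)) _
      have hb2 : ∫⁻ t in Ioi (1:ℝ), ℙ {ω | t < f1 ω} ≤
          ENNReal.ofReal (γ ^ i) * ENNReal.ofReal (1 / (a₀ - 1)) := by
        calc ∫⁻ t in Ioi (1:ℝ), ℙ {ω | t < f1 ω}
            ≤ ∫⁻ t in Ioi (1:ℝ), ENNReal.ofReal (γ ^ i) * ENNReal.ofReal (t ^ (-a₀)) :=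
              setLIntegral_mono' measurableSet_Ioi claimB
          _ = ENNReal.ofReal (γ ^ i) * ∫⁻ t in Ioi (1:ℝ), ENNReal.ofReal (t ^ (-a₀)) :=
              lintegral_const_mul _ (measurable_id.pow_const _).ennreal_ofReal
          _ = ENNReal.ofReal (γ ^ i) * ENNReal.ofReal (1 / (a₀ - 1)) := by rw [hJ]
      refine (add_le_add hb1 hb2).trans (le_of_eq ?_)
      rw [← ENNReal.ofReal_mul (pow_nonneg hγ0.le i),
        ← ENNReal.ofReal_add (pow_nonneg hγ0.le i)
          (mul_nonneg (pow_nonneg hγ0.le i) (le_of_lt (div_pos one_pos (by linarith))))]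
      congr 1
      rw [hA1def]; ring
    -- second piece
    have hI2 : ∫⁻ ω, ENNReal.ofReal (f2 ω) ∂ℙ ≤
        ENNReal.ofReal ((L/2) ^ (-q2) * (i:ℝ) ^ (-q2) + σ ^ i) := by
      rw [lintegral_eq_lintegral_meas_lt ℙ hf2nn hf2m.aemeasurable]
      have hiR : (0:ℝ) < (i:ℝ) := by exact_mod_cast lt_of_lt_of_le one_pos hi1
      set M : ℝ := (i:ℝ) * (L/2) with hMdef
      have hM0 : 0 < M := mul_pos hiR (div_pos hL0 two_pos)
      set ti : ℝ := M ^ (-q2) with htidef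
      have hti0 : 0 < ti := Real.rpow_pos_of_pos hM0 _
      set s0 : ℝ := min ti 1 with hs0def
      have hs00 : 0 < s0 := lt_min hti0 one_pos
      have hs01 : s0 ≤ 1 := min_le_right _ _
      have hq2inv : -q2⁻¹ < 0 := neg_neg_iff_pos.mpr (inv_pos.mpr hq2pos)
      have claimC : ∀ t ∈ Ioc s0 (1:ℝ), ℙ {ω | t < f2 ω} ≤ ENNReal.ofReal (σ ^ i) := by
        intro t ht
        obtain ⟨hts, ht1⟩ := ht
        have ht0 : 0 < t := hs00.trans hts
        have hti : ti < t := by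
          rcases min_lt_iff.mp hts with h | h
          · exact h
          · linarith
        have hsub : {ω | t < f2 ω} ⊆ {ω | Γ i ω ≤ t ^ (-q2⁻¹)} := by
          intro ω hω
          simp only [mem_setOf_eq] at hω ⊢
          by_cases hb : 1 < Γ i ω
          · have hω' : t < Γ i ω ^ (-q2) := by
              simpa only [hf2def, if_pos hb] using hω
            have hpos : 0 < Γ i ω := lt_trans one_pos hb
            have h2 : (Γ i ω ^ (-q2)) ^ (-q2⁻¹) < t ^ (-q2⁻¹) :=
              Real.rpow_lt_rpow_of_neg ht0 hω' hq2inv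
            rw [← Real.rpow_mul hpos.le,
              show (-q2) * (-q2⁻¹) = 1 by field_simp, Real.rpow_one] at h2
            exact h2.le
          · have hω' : t < 0 := by simpa only [hf2def, if_neg hb] using hω
            linarith
        refine (measure_mono hsub).trans ((hT2 i hi1 _).trans (ENNReal.ofReal_le_ofReal ?_))
        have hu : t ^ (-q2⁻¹) ≤ M := by
          have h2 : t ^ (-q2⁻¹) < ti ^ (-q2⁻¹) := Real.rpow_lt_rpow_of_neg hti0 hti hq2inv
          rw [htidef, ← Real.rpow_mul hM0.le,
            show (-q2) * (-q2⁻¹) = 1 by field_simp, Real.rpow_one] at h2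
          exact h2.le
        calc Real.exp (t ^ (-q2⁻¹)) * ρ ^ i ≤ Real.exp M * ρ ^ i :=
              mul_le_mul_of_nonneg_right (Real.exp_le_exp.mpr hu) (pow_nonneg hρ0.le i)
          _ = σ ^ i := by
              have e1 : Real.exp M = ρ ^ (-((i:ℝ)/2)) := by
                rw [Real.rpow_def_of_pos hρ0, hMdef, hLdef]
                congr 1; ring
              have e2 : ρ ^ i = ρ ^ ((i:ℝ)) := (Real.rpow_natCast ρ i).symm
              have e3 : σ ^ i = ρ ^ ((i:ℝ)/2) := by
                rw [hσdef, ← Real.rpow_natCast (ρ ^ ((1:ℝ)/2)) i, ← Real.rpow_mul hρ0.le]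
                congr 1; ring
              rw [e1, e2, e3, ← Real.rpow_add hρ0]
              congr 1; ring
      have claimD : ∀ t ∈ Ioi (1:ℝ), ℙ {ω | t < f2 ω} = 0 := by
        intro t ht
        have ht1 : (1:ℝ) < t := ht
        have hempty : {ω | t < f2 ω} = ∅ := by
          ext ω
          simp only [mem_setOf_eq, mem_empty_iff_false, iff_false, not_lt]
          by_cases hb : 1 < Γ i ω
          · have : Γ i ω ^ (-q2) < 1 :=
              Real.rpow_lt_one_of_one_lt_of_neg hb (neg_neg_iff_pos.mpr hq2pos)
            simp only [hf2def, if_pos hb]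
            linarith
          · simp only [hf2def, if_neg hb]
            linarith
        rw [hempty, measure_empty]
      rw [show Ioi (0:ℝ) = Ioc 0 1 ∪ Ioi 1 from (Ioc_union_Ioi_eq_Ioi zero_le_one).symm,
        lintegral_union measurableSet_Ioi (Ioc_disjoint_Ioi le_rfl),
        show Ioc (0:ℝ) 1 = Ioc 0 s0 ∪ Ioc s0 1 from (Ioc_union_Ioc_eq_Ioc hs00.le hs01).symm,
        lintegral_union measurableSet_Ioc (Ioc_disjoint_Ioc_of_le le_rfl)]
      have hc1 : ∫⁻ t in Ioc (0:ℝ) s0, ℙ {ω | t < f2 ω} ≤ ENNReal.ofReal ti := by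
        calc ∫⁻ t in Ioc (0:ℝ) s0, ℙ {ω | t < f2 ω}
            ≤ ∫⁻ _ in Ioc (0:ℝ) s0, 1 :=
              setLIntegral_mono' measurableSet_Ioc (fun t _ => prob_le_one)
          _ = volume (Ioc (0:ℝ) s0) := by rw [setLIntegral_one]
          _ = ENNReal.ofReal s0 := by rw [Real.volume_Ioc, sub_zero]
          _ ≤ ENNReal.ofReal ti := ENNReal.ofReal_le_ofReal (min_le_left _ _)
      have hc2 : ∫⁻ t in Ioc s0 (1:ℝ), ℙ {ω | t < f2 ω} ≤ ENNReal.ofReal (σ ^ i) := by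
        calc ∫⁻ t in Ioc s0 (1:ℝ), ℙ {ω | t < f2 ω}
            ≤ ∫⁻ _ in Ioc s0 (1:ℝ), ENNReal.ofReal (σ ^ i) :=
              setLIntegral_mono' measurableSet_Ioc claimC
          _ = ENNReal.ofReal (σ ^ i) * volume (Ioc s0 (1:ℝ)) := setLIntegral_const _ _
          _ ≤ ENNReal.ofReal (σ ^ i) * 1 := by
              apply mul_le_mul_right
              rw [Real.volume_Ioc]
              exact ENNReal.ofReal_le_one.mpr (by linarith)
          _ = ENNReal.ofReal (σ ^ i) := mul_one _
      have hc3 : ∫⁻ t in Ioi (1:ℝ), ℙ {ω | t < f2 ω} = 0 := by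
        rw [setLIntegral_congr_fun measurableSet_Ioi claimD, lintegral_zero]
      rw [hc3, add_zero]
      refine (add_le_add hc1 hc2).trans (le_of_eq ?_)
      rw [← ENNReal.ofReal_add hti0.le (pow_nonneg hσ0.le i)]
      congr 1
      rw [htidef, hMdef, Real.mul_rpow hiR.le (div_nonneg hL0.le (by norm_num))]
      ring
    -- put everything together
    have hglint : ∫⁻ ω, ENNReal.ofReal (|Real.log (Γ i ω)| ^ p *
        (Γ i ω ^ (-c⁻¹) + Γ i ω ^ (-d⁻¹)) ^ p) ∂ℙ ≤ ENNReal.ofReal (b i) := by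
      have hK2sum : (0:ℝ) ≤ (L/2) ^ (-q2) * (i:ℝ) ^ (-q2) + σ ^ i :=
        add_nonneg (mul_nonneg (Real.rpow_nonneg (div_nonneg hL0.le (by norm_num)) _)
          (Real.rpow_nonneg (Nat.cast_nonneg i) _)) (pow_nonneg hσ0.le _)
      calc ∫⁻ ω, ENNReal.ofReal (|Real.log (Γ i ω)| ^ p *
            (Γ i ω ^ (-c⁻¹) + Γ i ω ^ (-d⁻¹)) ^ p) ∂ℙ
          ≤ ∫⁻ ω, (ENNReal.ofReal (K1 * f1 ω) + ENNReal.ofReal (K2 * f2 ω)) ∂ℙ := by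
            apply lintegral_mono_ae
            filter_upwards [hgle] with ω h
            exact le_trans (ENNReal.ofReal_le_ofReal h) ENNReal.ofReal_add_le
        _ = (∫⁻ ω, ENNReal.ofReal (K1 * f1 ω) ∂ℙ) + ∫⁻ ω, ENNReal.ofReal (K2 * f2 ω) ∂ℙ :=
            lintegral_add_left ((hf1m.const_mul K1).ennreal_ofReal) _
        _ = ENNReal.ofReal K1 * (∫⁻ ω, ENNReal.ofReal (f1 ω) ∂ℙ) +
            ENNReal.ofReal K2 * ∫⁻ ω, ENNReal.ofReal (f2 ω) ∂ℙ := by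
            simp_rw [ENNReal.ofReal_mul hK1pos, ENNReal.ofReal_mul hK2pos]
            rw [lintegral_const_mul _ hf1m.ennreal_ofReal,
              lintegral_const_mul _ hf2m.ennreal_ofReal]
        _ ≤ ENNReal.ofReal K1 * ENNReal.ofReal (A1 * γ ^ i) +
            ENNReal.ofReal K2 * ENNReal.ofReal ((L/2) ^ (-q2) * (i:ℝ) ^ (-q2) + σ ^ i) :=
            add_le_add (mul_le_mul_right hI1 _) (mul_le_mul_right hI2 _)
        _ = ENNReal.ofReal (b i) := by
            rw [← ENNReal.ofReal_mul hK1pos, ← ENNReal.ofReal_mul hK2pos,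
              ← ENNReal.ofReal_add
                (mul_nonneg hK1pos (mul_nonneg hA1pos.le (pow_nonneg hγ0.le i)))
                (mul_nonneg hK2pos hK2sum)]
            congr 1
            rw [hbdef]; ring
    have hint : Integrable (fun ω => |Real.log (Γ i ω)| ^ p *
        (Γ i ω ^ (-c⁻¹) + Γ i ω ^ (-d⁻¹)) ^ p) ℙ := by
      refine ⟨hgm.aestronglyMeasurable, ?_⟩
      rw [hasFiniteIntegral_iff_norm]
      calc ∫⁻ ω, ENNReal.ofReal ‖|Real.log (Γ i ω)| ^ p *
            (Γ i ω ^ (-c⁻¹) + Γ i ω ^ (-d⁻¹)) ^ p‖ ∂ℙ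
          = ∫⁻ ω, ENNReal.ofReal (|Real.log (Γ i ω)| ^ p *
            (Γ i ω ^ (-c⁻¹) + Γ i ω ^ (-d⁻¹)) ^ p) ∂ℙ := by
            apply lintegral_congr_ae
            filter_upwards [hgnn] with ω h
            rw [Real.norm_eq_abs, abs_of_nonneg h]
        _ ≤ ENNReal.ofReal (b i) := hglint
        _ < ⊤ := ENNReal.ofReal_lt_top
    refine ⟨hint, integral_nonneg_of_ae hgnn, ?_⟩
    rw [integral_eq_lintegral_of_nonneg_ae hgnn hgm.aestronglyMeasurable]
    exact ENNReal.toReal_le_of_le_ofReal (hbnonneg i) hglint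
  constructor
  · exact fun i hi => (key i hi).1
  · have hbsum : Summable b := by
      apply Summable.add
      · exact (summable_geometric_of_lt_one hγ0.le hγ1).mul_left _
      · apply Summable.mul_left
        apply Summable.add
        · exact (Real.summable_nat_rpow.mpr (by linarith : -q2 < -1)).mul_left _
        · exact summable_geometric_of_lt_one hσ0.le hσ1
    apply Summable.of_nonneg_of_le _ _ hbsum
    · intro i
      by_cases hi : i₀ ≤ i
      · simp only [if_pos hi]; exact (key i hi).2.1
      · simp only [if_neg hi]; exact le_rfl
    · intro i
      by_cases hi : i₀ ≤ i
      · simp only [if_pos hi]; exact (key i hi).2.2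
      · simp only [if_neg hi]; exact hbnonneg i
end
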